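/- arXiv:2106.15470 — 7 statements merged into one kernel-verified Lean document; each statement's English description precedes it below -/
import Mathlib

section
/- Let G be a k-partite tournament with vertex classes V_1,…,V_k where |V_k| = s ≥ k−1. Then there exists a minimal feedback arc set of G in which the maximum number of pairwise vertex-disjoint transitive k-cliques is at most s − k + 1. In particular f_k(G) ≤ s − k + 1, where f_k(G) is the maximum number of pairwise disjoint transitive k-cliques found in every minimal feedback arc set of G. -/
/-- A directed graph (relation) is acyclic if it has no directed cycle,
equivalently its transitive closure is irreflexive. -/
def IsAcyclicRel {V : Type*} (r : V → V → Prop) : Prop :=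
  ∀ v, ¬ Relation.TransGen r v v

/-- `F` is a feedback arc set of the directed graph with edge set `E`:
`F ⊆ E` and every directed cycle of `E` contains an edge of `F`,
equivalently the complement of `F` in `E` is acyclic. -/
def IsFAS {V : Type*} (E F : V → V → Prop) : Prop :=
  (∀ u v, F u v → E u v) ∧ IsAcyclicRel (fun u v => E u v ∧ ¬ F u v)

/-- A feedback arc set is minimal if no proper subset of it is a feedback arc set. -/
def IsMinFAS {V : Type*} (E F : V → V → Prop) : Prop :=
  IsFAS E F ∧ ∀ F' : V → V → Prop, (∀ u v, F' u v → F u v) → F' ≠ F → ¬ IsFAS E F'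


/-- `S` induces a transitive `k`-clique in the directed graph `F`: it has `k` vertices,
any two distinct vertices of `S` are joined by an edge of `F`, and `F` restricted to `S`
is acyclic. -/
def IsTransClique {V : Type*} (F : V → V → Prop) (k : ℕ) (S : Finset V) : Prop :=
  S.card = k ∧ (∀ u ∈ S, ∀ v ∈ S, u ≠ v → F u v ∨ F v u) ∧
    IsAcyclicRel (fun a b => a ∈ S ∧ b ∈ S ∧ F a b)

private lemma relext {V : Type*} {F F' : V → V → Prop} (h : ∀ u v, F u v ↔ F' u v) : F = F' :=
  funext fun u => funext fun v => propext (h u v)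

open Classical in
private lemma exists_minFAS_le_aux {V : Type*} [Fintype V] (E : V → V → Prop) :
    ∀ (n : ℕ) (F₀ : V → V → Prop),
      (Finset.univ.filter fun p : V × V => F₀ p.1 p.2).card ≤ n → IsFAS E F₀ →
      ∃ F : V → V → Prop, (∀ u v, F u v → F₀ u v) ∧ IsMinFAS E F := by
  intro n
  induction n with
  | zero =>
    intro F₀ hcard hfas
    refine ⟨F₀, fun _ _ => id, hfas, ?_⟩
    intro F' hsub hne _
    apply hne
    have hempty : ∀ u v, ¬ F₀ u v := by
      intro u v hF
      have hmem : (u, v) ∈ Finset.univ.filter fun p : V × V => F₀ p.1 p.2 := by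
        simp [hF]
      have := Finset.card_pos.2 ⟨_, hmem⟩
      omega
    exact relext fun u v =>
      ⟨fun h => absurd (hsub u v h) (hempty u v), fun h => absurd h (hempty u v)⟩
  | succ n ih =>
    intro F₀ hcard hfas
    by_cases hmin : IsMinFAS E F₀
    · exact ⟨F₀, fun _ _ => id, hmin⟩
    · rw [IsMinFAS] at hmin
      push_neg at hmin
      obtain ⟨F', hsub, hne, hfas'⟩ := hmin hfas
      have hsubF : (Finset.univ.filter fun p : V × V => F' p.1 p.2) ⊆
          (Finset.univ.filter fun p : V × V => F₀ p.1 p.2) := by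
        intro p hp
        simp only [Finset.mem_filter, Finset.mem_univ, true_and] at hp ⊢
        exact hsub _ _ hp
      have hneF : (Finset.univ.filter fun p : V × V => F' p.1 p.2) ≠
          (Finset.univ.filter fun p : V × V => F₀ p.1 p.2) := by
        intro heq
        apply hne
        refine relext fun u v => ⟨fun h => hsub u v h, fun h => ?_⟩
        have hmem : (u, v) ∈ Finset.univ.filter fun p : V × V => F₀ p.1 p.2 := by simp [h]
        rw [← heq] at hmem
        simpa using hmem
      have hlt := Finset.card_lt_card (hsubF.ssubset_of_ne hneF)
      obtain ⟨F, h1, h2⟩ := ih F' (by omega) hfas'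
      exact ⟨F, fun u v h => hsub u v (h1 u v h), h2⟩

private lemma exists_minFAS_le {V : Type*} [Fintype V] (E F₀ : V → V → Prop)
    (h : IsFAS E F₀) :
    ∃ F : V → V → Prop, (∀ u v, F u v → F₀ u v) ∧ IsMinFAS E F := by
  classical
  exact exists_minFAS_le_aux E _ F₀ le_rfl h

open Classical in
private noncomputable def valAux {V : Type*} (k : ℕ) (i₀ : Fin k) (cl : V → Fin k)
    (x : {i : Fin k // i ≠ i₀} → V) (E : V → V → Prop) : V → ℚ := fun w =>
  if h : ∃ i, x i = w then (((Classical.choose h).1 : ℕ) : ℚ)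
  else if h2 : cl w = i₀ then (k : ℚ) + 1
  else if E w (x ⟨cl w, h2⟩) then ((cl w : ℕ) : ℚ) - 2⁻¹ else ((cl w : ℕ) : ℚ) + 2⁻¹

private lemma valAux_special {V : Type*} {k : ℕ} {i₀ : Fin k} {cl : V → Fin k}
    {x : {i : Fin k // i ≠ i₀} → V} (E : V → V → Prop)
    (hx : Function.Injective x) (i : {i : Fin k // i ≠ i₀}) :
    valAux k i₀ cl x E (x i) = ((i.1 : ℕ) : ℚ) := by
  have h : ∃ j, x j = x i := ⟨i, rfl⟩
  have hch : Classical.choose h = i := hx (Classical.choose_spec h)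
  simp only [valAux, dif_pos h, hch]

open Classical in
private lemma valAux_nonspecial {V : Type*} {k : ℕ} {i₀ : Fin k} {cl : V → Fin k}
    {x : {i : Fin k // i ≠ i₀} → V} (E : V → V → Prop) {w : V}
    (hw : ¬ ∃ i, x i = w) (h2 : ¬ cl w = i₀) :
    valAux k i₀ cl x E w =
      if E w (x ⟨cl w, h2⟩) then ((cl w : ℕ) : ℚ) - 2⁻¹ else ((cl w : ℕ) : ℚ) + 2⁻¹ := by
  simp only [valAux, dif_neg hw, dif_neg h2]

/-- Let `G = (E)` be a `k`-partite tournament with vertex classes `parts 0, …, parts (k-1)`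
where the class `parts i₀` has `s ≥ k − 1` vertices. Then some minimal feedback arc set of
`G` has at most `s − k + 1` pairwise disjoint transitive `k`-cliques; in particular
`f_k(G) ≤ s − k + 1`. -/
theorem exists_min_fas_with_few_disjoint_cliques {V : Type*} [Fintype V] [DecidableEq V]
    (k : ℕ) (parts : Fin k → Finset V) (E : V → V → Prop)
    (hpart : ∀ v : V, ∃! i, v ∈ parts i)
    (hsame : ∀ i, ∀ u ∈ parts i, ∀ v ∈ parts i, ¬ E u v)
    (hcross : ∀ i j, i ≠ j → ∀ u ∈ parts i, ∀ v ∈ parts j, (E u v ↔ ¬ E v u))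
    (i₀ : Fin k) (s : ℕ) (hs : (parts i₀).card = s) (hsk : k - 1 ≤ s) :
    (∃ F : V → V → Prop, IsMinFAS E F ∧
      ∀ C : Finset (Finset V), (∀ S ∈ C, IsTransClique F k S) →
        (∀ S ∈ C, ∀ S' ∈ C, S ≠ S' → Disjoint S S') →
        C.card ≤ s + 1 - k) ∧
    (∀ m : ℕ,
      (∀ F : V → V → Prop, IsMinFAS E F →
        ∃ C : Finset (Finset V), C.card = m ∧ (∀ S ∈ C, IsTransClique F k S) ∧
          (∀ S ∈ C, ∀ S' ∈ C, S ≠ S' → Disjoint S S')) →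
      m ≤ s + 1 - k) := by
  classical
  have hk : 0 < k := i₀.pos
  have hmain : ∃ F : V → V → Prop, IsMinFAS E F ∧
      ∀ C : Finset (Finset V), (∀ S ∈ C, IsTransClique F k S) →
        (∀ S ∈ C, ∀ S' ∈ C, S ≠ S' → Disjoint S S') →
        C.card ≤ s + 1 - k := by
    cases isEmpty_or_nonempty V with
    | inl hV =>
      refine ⟨fun _ _ => False, ⟨⟨fun u v h => h.elim, fun v => isEmptyElim v⟩, ?_⟩, ?_⟩
      · intro F' hsub hne _
        exact hne (funext fun u => isEmptyElim u)
      · intro C hC hD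
        have hCe : C = ∅ := by
          rw [Finset.eq_empty_iff_forall_notMem]
          intro S hS
          have h1 := (hC S hS).1
          have hSn : S.Nonempty := Finset.card_pos.1 (by omega)
          obtain ⟨v, _⟩ := hSn
          exact isEmptyElim v
        simp [hCe]
    | inr hV =>
      choose cl hcl₁ hcl₂ using hpart
      have hclveq : ∀ u : V, ∀ i : Fin k, u ∈ parts i → cl u = i :=
        fun u i h => (hcl₂ u i h).symm
      have hcard1 : Fintype.card {i : Fin k // i ≠ i₀} = k - 1 := by
        have h := Fintype.card_subtype_compl (fun i : Fin k => i = i₀)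
        simp only [Fintype.card_subtype_eq, Fintype.card_fin] at h
        exact h
      obtain ⟨g⟩ : Nonempty ({i : Fin k // i ≠ i₀} ↪ ↥(parts i₀)) :=
        Function.Embedding.nonempty_of_card_le
          (by rw [hcard1, Fintype.card_coe, hs]; exact hsk)
      set x : {i : Fin k // i ≠ i₀} → V := fun i => (g i : V) with hxdef
      have hxinj : Function.Injective x := fun a b h => g.injective (Subtype.ext h)
      have hxmem : ∀ i, x i ∈ parts i₀ := fun i => (g i).2
      have hclx : ∀ i, cl (x i) = i₀ := fun i => hclveq _ _ (hxmem i)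
      have hF₀fas : IsFAS E (fun u v => E u v ∧
          ¬ (valAux k i₀ cl x E u < valAux k i₀ cl x E v)) := by
        refine ⟨fun u v h => h.1, ?_⟩
        intro v hv
        have mono : ∀ a b, Relation.TransGen
            (fun u v => E u v ∧ ¬ (E u v ∧
              ¬ (valAux k i₀ cl x E u < valAux k i₀ cl x E v))) a b →
            valAux k i₀ cl x E a < valAux k i₀ cl x E b := by
          intro a b h
          induction h with
          | single h =>
            by_contra hlt
            exact h.2 ⟨h.1, hlt⟩
          | tail _ hstep ih =>
            refine lt_trans ih ?_
            by_contra hlt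
            exact hstep.2 ⟨hstep.1, hlt⟩
        exact lt_irrefl _ (mono v v hv)
      obtain ⟨F, hFsub, hFmin⟩ := exists_minFAS_le E _ hF₀fas
      have hFE : ∀ u v, F u v → E u v := fun u v h => (hFsub u v h).1
      have hA : ∀ (i : {i : Fin k // i ≠ i₀}), ∀ w ∈ parts i.1,
          ¬ F (x i) w ∧ ¬ F w (x i) := by
        intro i w hw
        have hclw : cl w = i.1 := hclveq w i.1 hw
        have hwns : ¬ ∃ j, x j = w := by
          rintro ⟨j, rfl⟩
          exact i.2 (hclw.symm.trans (hclx j))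
        have h2 : ¬ cl w = i₀ := by rw [hclw]; exact i.2
        have hxi : (⟨cl w, h2⟩ : {i : Fin k // i ≠ i₀}) = i := Subtype.ext hclw
        have hvw := valAux_nonspecial E hwns h2
        rw [hxi] at hvw
        have hvx : valAux k i₀ cl x E (x i) = ((i.1 : ℕ) : ℚ) := valAux_special E hxinj i
        have hcwq : ((cl w : ℕ) : ℚ) = ((i.1 : ℕ) : ℚ) := by rw [hclw]
        have hEdir : E (x i) w ↔ ¬ E w (x i) :=
          hcross i₀ i.1 (Ne.symm i.2) (x i) (hxmem i) w hw
        by_cases hE : E w (x i)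
        · rw [if_pos hE] at hvw
          constructor
          · intro hF
            exact (hEdir.1 (hFE _ _ hF)) hE
          · intro hF
            apply (hFsub _ _ hF).2
            rw [hvw, hvx, hcwq]
            norm_num
        · rw [if_neg hE] at hvw
          constructor
          · intro hF
            apply (hFsub _ _ hF).2
            rw [hvw, hvx, hcwq]
            norm_num
          · intro hF
            exact hE (hFE _ _ hF)
      set T : Finset V := Finset.univ.image x with hTdef
      have hTsub : T ⊆ parts i₀ := by
        intro v hv
        rw [hTdef, Finset.mem_image] at hv
        obtain ⟨i, -, rfl⟩ := hv
        exact hxmem i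
      have hTcard : T.card = k - 1 := by
        rw [hTdef, Finset.card_image_of_injective _ hxinj, Finset.card_univ, hcard1]
      have hclique : ∀ S : Finset V, IsTransClique F k S →
          ∃ u, u ∈ S ∧ u ∈ parts i₀ \ T := by
        rintro S ⟨hScard, hadj, -⟩
        have hinj : Set.InjOn cl S := by
          intro u hu v hv he
          by_contra hne
          have hE : E u v ∨ E v u := (hadj u hu v hv hne).imp (hFE u v) (hFE v u)
          have hu' : u ∈ parts (cl u) := hcl₁ u
          have hv' : v ∈ parts (cl u) := he ▸ hcl₁ v
          cases hE with
          | inl h => exact hsame (cl u) u hu' v hv' h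
          | inr h => exact hsame (cl u) v hv' u hu' h
        have himg : S.image cl = Finset.univ :=
          Finset.eq_univ_of_card _
            (by rw [Finset.card_image_of_injOn hinj, hScard, Fintype.card_fin])
        have hi₀ : i₀ ∈ S.image cl := himg ▸ Finset.mem_univ i₀
        obtain ⟨u, hu, hui₀⟩ := Finset.mem_image.1 hi₀
        refine ⟨u, hu, Finset.mem_sdiff.2 ⟨hui₀ ▸ hcl₁ u, ?_⟩⟩
        intro huT
        rw [hTdef, Finset.mem_image] at huT
        obtain ⟨i, -, hxi⟩ := huT
        have hi1 : i.1 ∈ S.image cl := himg ▸ Finset.mem_univ i.1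
        obtain ⟨w, hw, hwcl⟩ := Finset.mem_image.1 hi1
        have hwP : w ∈ parts i.1 := hwcl ▸ hcl₁ w
        have hwu : w ≠ u := by
          intro h
          apply i.2
          rw [← hwcl, h, hui₀]
        cases hadj w hw u hu hwu with
        | inl h => exact (hA i w hwP).2 (by rw [hxi]; exact h)
        | inr h => exact (hA i w hwP).1 (by rw [hxi]; exact h)
      refine ⟨F, hFmin, ?_⟩
      intro C hC hD
      have hch : ∀ S : Finset V, ∃ u : V,
          IsTransClique F k S → u ∈ S ∧ u ∈ parts i₀ \ T := by
        intro S
        by_cases h : IsTransClique F k S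
        · obtain ⟨u, h1, h2⟩ := hclique S h
          exact ⟨u, fun _ => ⟨h1, h2⟩⟩
        · exact ⟨Classical.arbitrary V, fun h' => absurd h' h⟩
      choose ψ hψ using hch
      have hle : C.card ≤ (parts i₀ \ T).card := by
        apply Finset.card_le_card_of_injOn ψ
        · intro S hS
          exact (hψ S (hC S hS)).2
        · intro S hS S' hS' heq
          by_contra hne
          have h1 := (hψ S (hC S hS)).1
          have h2 := (hψ S' (hC S' hS')).1
          rw [heq] at h1
          exact Finset.disjoint_left.1 (hD S hS S' hS' hne) (heq ▸ (hψ S (hC S hS)).1) h2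
      have hsd : (parts i₀ \ T).card = s - (k - 1) := by
        rw [Finset.card_sdiff_of_subset hTsub, hTcard, hs]
      omega
  refine ⟨hmain, fun m hm => ?_⟩
  obtain ⟨F, hF, hbound⟩ := hmain
  obtain ⟨C, hCcard, hC1, hC2⟩ := hm F hF
  exact hCcard ▸ hbound C hC1 hC2
end

section
/- Let G be a k-partite tournament with classes V_1,…,V_k, let u_1,…,u_{k−1} be distinct vertices of V_k, and let F be the set of all edges of G connecting u_i to a vertex of V_i, for i = 1,…,k−1. Then F is a feedback arc set of G, i.e., the complement of F in G is acyclic. -/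
/-- Let `G = (E)` be a `k`-partite tournament with classes `parts 0, …, parts (k-1)`, let
`u 0, …, u (k-2)` be distinct vertices of the last class, and let `Star` be the set of all
edges of `G` connecting `u i` to a vertex of class `i` (for `i = 0, …, k-2`).  Then the
set of edges of `G` formed by the stars is acyclic, so removing it leaves an acyclic
graph's complement: the set of all remaining edges is a feedback arc set of `G`. -/
theorem star_removal_is_feedback_arc_set {V : Type*} [Fintype V] [DecidableEq V]
    (k : ℕ) (hk : 1 ≤ k) (parts : Fin k → Finset V) (E : V → V → Prop)
    (hpart : ∀ v : V, ∃! i, v ∈ parts i)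
    (hsame : ∀ i, ∀ u ∈ parts i, ∀ v ∈ parts i, ¬ E u v)
    (hcross : ∀ i j, i ≠ j → ∀ u ∈ parts i, ∀ v ∈ parts j, (E u v ↔ ¬ E v u))
    (u : Fin (k - 1) → V) (huinj : Function.Injective u)
    (hu : ∀ i, u i ∈ parts ⟨k - 1, Nat.sub_lt hk Nat.one_pos⟩) :
    IsAcyclicRel (fun a b => E a b ∧
      ∃ i : Fin (k - 1), (a = u i ∧ b ∈ parts (Fin.castLE (Nat.sub_le k 1) i)) ∨
        (b = u i ∧ a ∈ parts (Fin.castLE (Nat.sub_le k 1) i))) ∧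
    IsFAS E (fun a b => E a b ∧
      ¬ ∃ i : Fin (k - 1), (a = u i ∧ b ∈ parts (Fin.castLE (Nat.sub_le k 1) i)) ∨
        (b = u i ∧ a ∈ parts (Fin.castLE (Nat.sub_le k 1) i))) := by
  classical
  set last : Fin k := ⟨k - 1, Nat.sub_lt hk Nat.one_pos⟩ with hlast
  set S : V → V → Prop := fun a b => E a b ∧
      ∃ i : Fin (k - 1), (a = u i ∧ b ∈ parts (Fin.castLE (Nat.sub_le k 1) i)) ∨
        (b = u i ∧ a ∈ parts (Fin.castLE (Nat.sub_le k 1) i)) with hS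
  have hcast : ∀ i : Fin (k - 1), Fin.castLE (Nat.sub_le k 1) i ≠ last := by
    intro i h
    have : (i : ℕ) = k - 1 := congrArg Fin.val h
    exact absurd this (Nat.ne_of_lt i.isLt)
  -- u j is never in parts (castLE i)
  have hunot : ∀ (j i : Fin (k - 1)), u j ∉ parts (Fin.castLE (Nat.sub_le k 1) i) := by
    intro j i hmem
    exact hcast i ((hpart (u j)).unique hmem (hu j))
  -- uniqueness of part index for leaves
  have hleaf : ∀ v (i j : Fin (k - 1)),
      v ∈ parts (Fin.castLE (Nat.sub_le k 1) i) → v ∈ parts (Fin.castLE (Nat.sub_le k 1) j) →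
      i = j := by
    intro v i j hi hj
    have := (hpart v).unique hi hj
    exact Fin.castLE_injective _ this
  -- no 2-cycle of S (in fact: S a b and E b a is impossible)
  have lemA : ∀ a b, S a b → E b a → False := by
    rintro a b ⟨hab, i, ⟨rfl, hb⟩ | ⟨rfl, ha⟩⟩ hba
    · exact (hcross last _ (Ne.symm (hcast i)) _ (hu i) _ hb).mp hab hba
    · exact (hcross _ last (hcast i) _ ha _ (hu i)).mp hab hba
  -- no loop
  have hloop : ∀ v, ¬ S v v := by
    rintro v ⟨hvv, i, ⟨rfl, hb⟩ | ⟨rfl, ha⟩⟩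
    · exact hunot i i hb
    · exact hunot i i ha
  -- no path of length 3
  have lemC : ∀ a b c d, S a b → S b c → S c d → False := by
    rintro a b c d hab ⟨hbc, j, hj⟩ hcd
    rcases hj with ⟨hbj, hc⟩ | ⟨hcj, hb⟩
    · -- b = u j is a center, c ∈ parts j a leaf
      subst hbj
      -- the edge from c: c is a leaf, so it must go back to u j = b
      rcases hcd with ⟨hcd, m, ⟨hcm, hd⟩ | ⟨hdm, hc'⟩⟩
      · exact hunot m j (hcm ▸ hc)
      · have : m = j := hleaf c m j hc' hc
        subst this
        exact lemA _ _ ⟨hbc, m, Or.inl ⟨rfl, hc⟩⟩ (hdm ▸ hcd)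
    · -- c = u j is a center, b ∈ parts j a leaf; the edge into b must come from u j = c
      subst hcj
      rcases hab with ⟨hab, m, ⟨ham, hb'⟩ | ⟨hbm, ha⟩⟩
      · have : m = j := hleaf b m j hb' hb
        subst this
        exact lemA _ _ ⟨hbc, m, Or.inr ⟨rfl, hb⟩⟩ (ham ▸ hab)
      · exact hunot m j (hbm ▸ hb)
  -- any transitive chain has length 1 or 2
  have hchain : ∀ a b, Relation.TransGen S a b → S a b ∨ ∃ x, S a x ∧ S x b := by
    intro a b h
    induction h with
    | single h => exact Or.inl h
    | tail _ hbc ih =>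
      rcases ih with h | ⟨x, h1, h2⟩
      · exact Or.inr ⟨_, h, hbc⟩
      · exact absurd (lemC _ _ _ _ h1 h2 hbc) not_false
  have hacyc : IsAcyclicRel S := by
    intro v hv
    rcases hchain v v hv with h | ⟨x, h1, h2⟩
    · exact hloop v h
    · exact lemA _ _ h1 h2.1
  refine ⟨hacyc, fun a b h => h.1, ?_⟩
  intro v hv
  refine hacyc v (Relation.TransGen.mono ?_ _ _ hv)
  rintro a b ⟨hab, hnF⟩
  refine ⟨hab, ?_⟩
  by_contra hne
  exact hnF ⟨hab, hne⟩
end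

section
/- For all sufficiently large n, a random orientation T of the complete bipartite graph with parts A_1, A_2 of size n satisfies the following with probability at least 1 − 1/n: for every permutation π of the vertices and all sets R ⊆ A_1, S ⊆ A_2 with |R| ≥ n/20 and |S| ≥ n/20, there is at least one edge of L_π(T) between R and S. -/
/-- The oriented complete bipartite graph determined by the orientation data `ω`:
the edge between left vertex `a` and right vertex `b` is directed from `a` to `b`
iff `ω a b = true`. -/
def bipEdge {n : ℕ} (ω : Fin n → Fin n → Bool) :
    (Fin n ⊕ Fin n) → (Fin n ⊕ Fin n) → Prop
  | Sum.inl a, Sum.inr b => ω a b = true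
  | Sum.inr b, Sum.inl a => ω a b = false
  | _, _ => False

/-- `u` and `v` are joined by an edge of `L_π(T)`, i.e. the edge of `T` between them
goes forward with respect to `π`. -/
def bipLAdj {n : ℕ} (ω : Fin n → Fin n → Bool) (π : Fin n ⊕ Fin n → ℕ)
    (u v : Fin n ⊕ Fin n) : Prop :=
  (bipEdge ω u v ∧ π u < π v) ∨ (bipEdge ω v u ∧ π v < π u)

lemma aux_pow : ∀ m : ℕ, 15 ≤ m → 2000 * (m + 1) ≤ 2 ^ m := by
  intro m hm
  induction m with
  | zero => omega
  | succ k ih =>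
    rcases Nat.lt_or_ge k 15 with h | h
    · have hk : k = 14 := by omega
      subst hk; norm_num
    · have h1 := ih h
      have : 2 ^ (k+1) = 2 * 2 ^ k := by ring
      omega

lemma two_n_le (n : ℕ) (hn : 15000 ≤ n) : n + n ≤ 2 ^ (n / 1000) := by
  have hm : 15 ≤ n / 1000 := by omega
  have h2 : n < 1000 * (n / 1000 + 1) := by omega
  calc n + n ≤ 2000 * (n / 1000 + 1) := by omega
    _ ≤ 2 ^ (n / 1000) := aux_pow _ hm

lemma expo (n : ℕ) (hn : 15000 ≤ n) :
    (n + n) * (n / 1000) + 3 * n ≤ n * n / 400 := by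
  set m := n / 1000 with hm
  have h1 : 1000 * m ≤ n := by omega
  have hm15 : 15 ≤ m := by omega
  rw [Nat.le_div_iff_mul_le (by norm_num)]
  have A : n * (1000 * m) ≤ n * n := Nat.mul_le_mul_left n h1
  have B : n * 15 ≤ n * m := Nat.mul_le_mul_left n hm15
  nlinarith [A, B]

lemma rank_exists {n : ℕ} (π : Fin n ⊕ Fin n → ℕ) (hπ : Function.Injective π) :
    ∃ ρ : Fin n ⊕ Fin n → Fin (n + n), Function.Injective ρ ∧
      ∀ u v, ((ρ u : ℕ) < (ρ v : ℕ) ↔ π u < π v) := by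
  have hs : (Finset.univ.image π).card = n + n := by
    rw [Finset.card_image_of_injective _ hπ, Finset.card_univ, Fintype.card_sum,
      Fintype.card_fin]
  let e := (Finset.univ.image π).orderIsoOfFin hs
  refine ⟨fun v => e.symm ⟨π v, Finset.mem_image_of_mem _ (Finset.mem_univ v)⟩, ?_, ?_⟩
  · intro u v h
    apply hπ
    have := e.symm.injective h
    exact Subtype.ext_iff.mp this
  · intro u v
    rw [Fin.lt_iff_val_lt_val.symm, e.symm.lt_iff_lt, Subtype.mk_lt_mk]

lemma bipLAdj_congr {n : ℕ} (ω : Fin n → Fin n → Bool) (π π' : Fin n ⊕ Fin n → ℕ)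
    (h : ∀ u v, π u < π v ↔ π' u < π' v) (u v : Fin n ⊕ Fin n) :
    bipLAdj ω π u v ↔ bipLAdj ω π' u v := by
  unfold bipLAdj
  rw [h, h]

lemma determined {n : ℕ} (ω : Fin n → Fin n → Bool) (π : Fin n ⊕ Fin n → ℕ)
    (a b : Fin n) (hne : π (Sum.inl a) ≠ π (Sum.inr b))
    (h : ¬ bipLAdj ω π (Sum.inl a) (Sum.inr b)) :
    ω a b = decide (π (Sum.inr b) < π (Sum.inl a)) := by
  have e1 : bipEdge ω (Sum.inl a) (Sum.inr b) = (ω a b = true) := rfl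
  have e2 : bipEdge ω (Sum.inr b) (Sum.inl a) = (ω a b = false) := rfl
  unfold bipLAdj at h
  rw [e1, e2] at h
  push_neg at h
  cases hab : ω a b <;> simp [hab] at h ⊢ <;> omega

lemma count_le {n : ℕ} (ρ : Fin n ⊕ Fin n → Fin (n + n)) (R S : Finset (Fin n)) :
    (Finset.univ.filter fun ω : Fin n → Fin n → Bool =>
        ∀ a ∈ R, ∀ b ∈ S, ω a b =
          decide ((ρ (Sum.inr b) : ℕ) < (ρ (Sum.inl a) : ℕ))).card
      ≤ 2 ^ (n * n - R.card * S.card) := by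
  classical
  set c : Finset (Fin n × Fin n) := R ×ˢ S with hc
  have key := Finset.card_le_card_of_injOn
    (f := fun ω : Fin n → Fin n → Bool => fun p : {x // x ∈ cᶜ} => ω p.1.1 p.1.2)
    (s := Finset.univ.filter fun ω : Fin n → Fin n → Bool =>
        ∀ a ∈ R, ∀ b ∈ S, ω a b =
          decide ((ρ (Sum.inr b) : ℕ) < (ρ (Sum.inl a) : ℕ)))
    (t := (Finset.univ : Finset ({x // x ∈ cᶜ} → Bool)))
    (fun _ _ => Finset.mem_univ _)
    (by
      intro ω hω ω' hω' heq
      simp only [Finset.mem_coe, Finset.mem_filter] at hω hω'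
      funext a b
      by_cases hab : (a, b) ∈ c
      · rw [hc, Finset.mem_product] at hab
        rw [hω.2 a hab.1 b hab.2, hω'.2 a hab.1 b hab.2]
      · exact congrFun heq ⟨(a, b), Finset.mem_compl.mpr hab⟩)
  calc _ ≤ (Finset.univ : Finset ({x // x ∈ cᶜ} → Bool)).card := key
    _ = 2 ^ (n * n - R.card * S.card) := by
        rw [Finset.card_univ, Fintype.card_fun, Fintype.card_bool, Fintype.card_coe,
          Finset.card_compl, hc, Finset.card_product]
        congr 1
        simp [Fintype.card_prod]

/-- For all sufficiently large `n`, with probability at least `1 − 1/n` a random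
orientation of `K_{n,n}` is such that for every vertex order `π` and all `R ⊆ A₁`,
`S ⊆ A₂` with `|R| ≥ n/20` and `|S| ≥ n/20`, there is an edge of `L_π(T)` between `R`
and `S` (stated by counting: the bad orientations number at most `2^{n·n}/n`). -/
theorem whp_edge_between_large_sets : ∃ N : ℕ, ∀ n ≥ N,
    Nat.card {ω : Fin n → Fin n → Bool //
        ¬ ∀ (π : Fin n ⊕ Fin n → ℕ), Function.Injective π →
          ∀ R S : Finset (Fin n), n ≤ 20 * R.card → n ≤ 20 * S.card →
            ∃ a ∈ R, ∃ b ∈ S, bipLAdj ω π (Sum.inl a) (Sum.inr b)} * n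
      ≤ 2 ^ (n * n) := by
  classical
  refine ⟨15000, fun n hn => ?_⟩
  set K : ℕ := n * n / 400 with hKdef
  set P : (Fin n → Fin n → Bool) → Prop := fun ω =>
    ∀ (π : Fin n ⊕ Fin n → ℕ), Function.Injective π →
      ∀ R S : Finset (Fin n), n ≤ 20 * R.card → n ≤ 20 * S.card →
        ∃ a ∈ R, ∃ b ∈ S, bipLAdj ω π (Sum.inl a) (Sum.inr b) with hP
  -- the union-bound pieces
  set Φ : (Fin n ⊕ Fin n → Fin (n + n)) → Finset (Fin n) → Finset (Fin n) →
      Finset (Fin n → Fin n → Bool) := fun ρ R S =>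
    Finset.univ.filter fun ω =>
      (n ≤ 20 * R.card ∧ n ≤ 20 * S.card) ∧
        ∀ a ∈ R, ∀ b ∈ S, ω a b =
          decide ((ρ (Sum.inr b) : ℕ) < (ρ (Sum.inl a) : ℕ)) with hΦ
  have hΦcard : ∀ ρ R S, (Φ ρ R S).card ≤ 2 ^ (n * n - K) := by
    intro ρ R S
    by_cases hc : n ≤ 20 * R.card ∧ n ≤ 20 * S.card
    · have hsub : Φ ρ R S ⊆ Finset.univ.filter fun ω : Fin n → Fin n → Bool =>
          ∀ a ∈ R, ∀ b ∈ S, ω a b =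
            decide ((ρ (Sum.inr b) : ℕ) < (ρ (Sum.inl a) : ℕ)) := by
        intro ω hω
        rw [hΦ] at hω
        simp only [Finset.mem_filter] at hω ⊢
        exact ⟨hω.1, hω.2.2⟩
      have h1 : (Φ ρ R S).card ≤ 2 ^ (n * n - R.card * S.card) :=
        le_trans (Finset.card_le_card hsub) (count_le ρ R S)
      have hK : K ≤ R.card * S.card := by
        have h400 : n * n ≤ 400 * (R.card * S.card) := by
          calc n * n ≤ (20 * R.card) * (20 * S.card) := Nat.mul_le_mul hc.1 hc.2
            _ = 400 * (R.card * S.card) := by ring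
        calc K = n * n / 400 := rfl
          _ ≤ 400 * (R.card * S.card) / 400 := Nat.div_le_div_right h400
          _ = R.card * S.card := Nat.mul_div_cancel_left _ (by norm_num)
      exact le_trans h1 (Nat.pow_le_pow_right (by norm_num) (by omega))
    · have : Φ ρ R S = ∅ := by
        rw [hΦ]
        refine Finset.filter_false_of_mem fun ω _ => ?_
        intro hcon
        exact hc hcon.1
      rw [this]
      simp
  -- the bad set is contained in the union
  have hsub : (Finset.univ.filter fun ω => ¬ P ω) ⊆
      (Finset.univ : Finset (Fin n ⊕ Fin n → Fin (n + n))).biUnion fun ρ =>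
        (Finset.univ : Finset (Finset (Fin n))).biUnion fun R =>
          (Finset.univ : Finset (Finset (Fin n))).biUnion fun S => Φ ρ R S := by
    intro ω hω
    rw [Finset.mem_filter] at hω
    have hbad : ¬ ∀ (π : Fin n ⊕ Fin n → ℕ), Function.Injective π →
        ∀ R S : Finset (Fin n), n ≤ 20 * R.card → n ≤ 20 * S.card →
          ∃ a ∈ R, ∃ b ∈ S, bipLAdj ω π (Sum.inl a) (Sum.inr b) := hω.2
    push_neg at hbad
    obtain ⟨π, hπinj, R, S, hR, hS, hno⟩ := hbad
    obtain ⟨ρ, hρinj, hρord⟩ := rank_exists π hπinj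
    simp only [Finset.mem_biUnion, Finset.mem_univ, true_and]
    refine ⟨ρ, R, S, ?_⟩
    rw [hΦ]
    simp only [Finset.mem_filter, Finset.mem_univ, true_and]
    refine ⟨⟨hR, hS⟩, fun a ha b hb => ?_⟩
    have hnadj : ¬ bipLAdj ω (fun v => (ρ v : ℕ)) (Sum.inl a) (Sum.inr b) := by
      intro hadj
      exact hno a ha b hb ((bipLAdj_congr ω π (fun v => (ρ v : ℕ))
        (fun u v => (hρord u v).symm) _ _).mpr hadj)
    refine determined ω (fun v => (ρ v : ℕ)) a b ?_ hnadj
    intro hcon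
    have : ρ (Sum.inl a) = ρ (Sum.inr b) := Fin.val_injective hcon
    exact (by simp : (Sum.inl a : Fin n ⊕ Fin n) ≠ Sum.inr b) (hρinj this)
  -- count the union
  have hcount : (Finset.univ.filter fun ω => ¬ P ω).card ≤
      (n + n) ^ (n + n) * (2 ^ n * (2 ^ n * 2 ^ (n * n - K))) := by
    calc (Finset.univ.filter fun ω => ¬ P ω).card
        ≤ _ := Finset.card_le_card hsub
      _ ≤ ∑ ρ : Fin n ⊕ Fin n → Fin (n + n),
            ((Finset.univ : Finset (Finset (Fin n))).biUnion fun R =>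
              (Finset.univ : Finset (Finset (Fin n))).biUnion fun S => Φ ρ R S).card :=
          Finset.card_biUnion_le
      _ ≤ ∑ _ρ : Fin n ⊕ Fin n → Fin (n + n), 2 ^ n * (2 ^ n * 2 ^ (n * n - K)) := by
          refine Finset.sum_le_sum fun ρ _ => ?_
          calc _ ≤ ∑ R : Finset (Fin n),
                ((Finset.univ : Finset (Finset (Fin n))).biUnion fun S => Φ ρ R S).card :=
              Finset.card_biUnion_le
            _ ≤ ∑ _R : Finset (Fin n), 2 ^ n * 2 ^ (n * n - K) := by
              refine Finset.sum_le_sum fun R _ => ?_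
              calc _ ≤ ∑ S : Finset (Fin n), (Φ ρ R S).card := Finset.card_biUnion_le
                _ ≤ ∑ _S : Finset (Fin n), 2 ^ (n * n - K) :=
                  Finset.sum_le_sum fun S _ => hΦcard ρ R S
                _ = 2 ^ n * 2 ^ (n * n - K) := by
                  rw [Finset.sum_const, Finset.card_univ, Fintype.card_finset,
                    Fintype.card_fin, smul_eq_mul]
            _ = 2 ^ n * (2 ^ n * 2 ^ (n * n - K)) := by
              rw [Finset.sum_const, Finset.card_univ, Fintype.card_finset,
                Fintype.card_fin, smul_eq_mul]
      _ = (n + n) ^ (n + n) * (2 ^ n * (2 ^ n * 2 ^ (n * n - K))) := by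
          rw [Finset.sum_const, Finset.card_univ, Fintype.card_fun, Fintype.card_fin,
            Fintype.card_sum, Fintype.card_fin, smul_eq_mul]
  -- identify Nat.card with the filter card
  have hNat : Nat.card {ω : Fin n → Fin n → Bool // ¬ P ω} =
      (Finset.univ.filter fun ω => ¬ P ω).card := by
    rw [Nat.card_eq_fintype_card, Fintype.card_subtype]
  -- final arithmetic
  have hKle : K ≤ n * n := Nat.div_le_self _ _
  have h2n : n + n ≤ 2 ^ (n / 1000) := two_n_le n hn
  have hnle : n ≤ 2 ^ n := Nat.le_of_lt (Nat.lt_two_pow_self (n := n))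
  have hexp : (n / 1000) * (n + n) + (n + (n + n)) ≤ K := by
    have := expo n hn
    rw [hKdef]
    calc (n / 1000) * (n + n) + (n + (n + n)) = (n + n) * (n / 1000) + 3 * n := by ring
      _ ≤ n * n / 400 := this
  calc Nat.card {ω : Fin n → Fin n → Bool // ¬ P ω} * n
      ≤ ((n + n) ^ (n + n) * (2 ^ n * (2 ^ n * 2 ^ (n * n - K)))) * n := by
        rw [hNat]; exact Nat.mul_le_mul_right n hcount
    _ ≤ ((2 ^ (n / 1000)) ^ (n + n) * (2 ^ n * (2 ^ n * 2 ^ (n * n - K)))) * 2 ^ n := by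
        exact Nat.mul_le_mul (Nat.mul_le_mul_right _ (Nat.pow_le_pow_left h2n _)) hnle
    _ = 2 ^ ((n / 1000) * (n + n) + (n + (n + n)) + (n * n - K)) := by
        rw [← pow_mul, ← pow_add, ← pow_add, ← pow_add, ← pow_add]
        ring_nf
    _ ≤ 2 ^ (n * n) := Nat.pow_le_pow_right (by norm_num) (by omega)
end

section
/- Let T be an orientation of the complete bipartite graph with parts A_1, A_2 of size n, let π be a permutation of the vertices, and suppose that for every ordered pair (u,v) of distinct vertices in the same part and every choice of signs D ∈ {+,−}², the number of vertices consistent with (u,v) according to D is at most 1.1n/4. Then at most one vertex of A_1 has degree smaller than n/18 in L_π(T), and at most one vertex of A_2 has degree smaller than n/18 in L_π(T). (Assume n ≥ some absolute constant, e.g. n ≥ 100.) -/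
open Finset

/-- Core counting contradiction: two distinct low-degree vertices `u, v` in the same
part (with neighbours given by an injection `f` into the other part) lead to a
contradiction with the consistency bounds. -/
lemma core_contradiction (n : ℕ) (hn : 100 ≤ n)
    (E : (Fin n ⊕ Fin n) → (Fin n ⊕ Fin n) → Prop)
    (π : Fin n ⊕ Fin n → ℕ)
    (u v : Fin n ⊕ Fin n) (hlt : π u < π v)
    (f : Fin n → Fin n ⊕ Fin n) (hf : Function.Injective f)
    (honeu : ∀ b, E u (f b) ↔ ¬ E (f b) u)
    (honev : ∀ b, E v (f b) ↔ ¬ E (f b) v)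
    (hcons : ∀ D : Bool × Bool,
      (Nat.card {w : Fin n ⊕ Fin n //
          (if D.1 then E u w else E w u) ∧ (if D.2 then E v w else E w v)} : ℝ)
        ≤ 1.1 * n / 4)
    (hu : (Nat.card {w : Fin n ⊕ Fin n //
        (E u w ∧ π u < π w) ∨ (E w u ∧ π w < π u)} : ℝ) < n / 18)
    (hv : (Nat.card {w : Fin n ⊕ Fin n //
        (E v w ∧ π v < π w) ∨ (E w v ∧ π w < π v)} : ℝ) < n / 18) :
    False := by
  classical
  set P1 : (Fin n ⊕ Fin n) → Prop := fun w => (E u w ∧ π u < π w) ∨ (E w u ∧ π w < π u)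
    with hP1
  set P2 : (Fin n ⊕ Fin n) → Prop := fun w => (E v w ∧ π v < π w) ∨ (E w v ∧ π w < π v)
    with hP2
  set Q1 : (Fin n ⊕ Fin n) → Prop := fun w => E u w ∧ E v w with hQ1
  set Q2 : (Fin n ⊕ Fin n) → Prop := fun w => E w u ∧ E v w with hQ2
  set Q3 : (Fin n ⊕ Fin n) → Prop := fun w => E w u ∧ E w v with hQ3
  -- every vertex in the image of `f` satisfies one of the five predicates
  have cover : ∀ b : Fin n, P1 (f b) ∨ P2 (f b) ∨ Q1 (f b) ∨ Q2 (f b) ∨ Q3 (f b) := by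
    intro b
    by_cases e1 : E u (f b)
    · by_cases e2 : E v (f b)
      · exact Or.inr (Or.inr (Or.inl ⟨e1, e2⟩))
      · have e2' : E (f b) v := by
          by_contra h; exact e2 ((honev b).mpr h)
        rcases lt_or_ge (π u) (π (f b)) with h | h
        · exact Or.inl (Or.inl ⟨e1, h⟩)
        · exact Or.inr (Or.inl (Or.inr ⟨e2', lt_of_le_of_lt h hlt⟩))
    · have e1' : E (f b) u := by
        by_contra h; exact e1 ((honeu b).mpr h)
      by_cases e2 : E v (f b)
      · exact Or.inr (Or.inr (Or.inr (Or.inl ⟨e1', e2⟩)))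
      · have e2' : E (f b) v := by
          by_contra h; exact e2 ((honev b).mpr h)
        exact Or.inr (Or.inr (Or.inr (Or.inr ⟨e1', e2'⟩)))
  have card_or_le : ∀ p q : (Fin n ⊕ Fin n) → Prop,
      Nat.card {w : Fin n ⊕ Fin n // p w ∨ q w} ≤
        Nat.card {w : Fin n ⊕ Fin n // p w} + Nat.card {w : Fin n ⊕ Fin n // q w} := by
    intro p q
    have h1 : Nat.card {w : Fin n ⊕ Fin n // p w ∨ q w} =
        ({w : Fin n ⊕ Fin n | p w} ∪ {w : Fin n ⊕ Fin n | q w}).ncard := by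
      rw [← Set.setOf_or]
      exact Nat.card_coe_set_eq _
    have h2 : Nat.card {w : Fin n ⊕ Fin n // p w} = ({w : Fin n ⊕ Fin n | p w}).ncard :=
      Nat.card_coe_set_eq _
    have h3 : Nat.card {w : Fin n ⊕ Fin n // q w} = ({w : Fin n ⊕ Fin n | q w}).ncard :=
      Nat.card_coe_set_eq _
    rw [h1, h2, h3]
    exact Set.ncard_union_le _ _
  -- lower bound
  have hlow : n ≤ Nat.card {w : Fin n ⊕ Fin n // P1 w ∨ P2 w ∨ Q1 w ∨ Q2 w ∨ Q3 w} := by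
    rw [Nat.card_eq_fintype_card, Fintype.card_subtype]
    calc n = (univ : Finset (Fin n)).card := by simp
    _ ≤ _ := Finset.card_le_card_of_injOn f
        (fun b _ => mem_filter.mpr ⟨mem_univ _, cover b⟩) hf.injOn
  -- upper bound: split the disjunction
  have hsplit : Nat.card {w : Fin n ⊕ Fin n // P1 w ∨ P2 w ∨ Q1 w ∨ Q2 w ∨ Q3 w} ≤
      Nat.card {w : Fin n ⊕ Fin n // P1 w} + (Nat.card {w : Fin n ⊕ Fin n // P2 w} +
        (Nat.card {w : Fin n ⊕ Fin n // Q1 w} + (Nat.card {w : Fin n ⊕ Fin n // Q2 w} +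
          Nat.card {w : Fin n ⊕ Fin n // Q3 w}))) :=
    (card_or_le _ _).trans (Nat.add_le_add_left
      ((card_or_le _ _).trans (Nat.add_le_add_left
        ((card_or_le _ _).trans (Nat.add_le_add_left
          (card_or_le _ _) _)) _)) _)
  -- consistency bounds for the three sign patterns
  have hq1 : (Nat.card {w : Fin n ⊕ Fin n // Q1 w} : ℝ) ≤ 1.1 * n / 4 := hcons (true, true)
  have hq2 : (Nat.card {w : Fin n ⊕ Fin n // Q2 w} : ℝ) ≤ 1.1 * n / 4 := hcons (false, true)
  have hq3 : (Nat.card {w : Fin n ⊕ Fin n // Q3 w} : ℝ) ≤ 1.1 * n / 4 := hcons (false, false)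
  have hp1 : (Nat.card {w : Fin n ⊕ Fin n // P1 w} : ℝ) < n / 18 := hu
  have hp2 : (Nat.card {w : Fin n ⊕ Fin n // P2 w} : ℝ) < n / 18 := hv
  have htotal : (n : ℝ) ≤ Nat.card {w : Fin n ⊕ Fin n // P1 w} +
      (Nat.card {w : Fin n ⊕ Fin n // P2 w} + (Nat.card {w : Fin n ⊕ Fin n // Q1 w} +
        (Nat.card {w : Fin n ⊕ Fin n // Q2 w} + Nat.card {w : Fin n ⊕ Fin n // Q3 w}))) := by
    exact_mod_cast hlow.trans hsplit
  have hn' : (100 : ℝ) ≤ n := by exact_mod_cast hn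
  linarith

/-- Let `T = (E)` be an orientation of `K_{n,n}` (parts the left and right copies of
`Fin n`) and `π` an injective vertex labelling. Suppose that for every ordered pair
`(u,v)` of distinct vertices in the same part and every sign pattern `D`, the number of
vertices `D`-consistent with `(u,v)` is at most `1.1n/4`.  Then at most one vertex of
each part has degree smaller than `n/18` in `L_π(T)`. -/
theorem at_most_one_low_degree_vertex (n : ℕ) (hn : 100 ≤ n)
    (E : (Fin n ⊕ Fin n) → (Fin n ⊕ Fin n) → Prop)
    (hor : ∀ a b : Fin n, E (Sum.inl a) (Sum.inr b) ↔ ¬ E (Sum.inr b) (Sum.inl a))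
    (hsame : ∀ a b : Fin n, ¬ E (Sum.inl a) (Sum.inl b) ∧ ¬ E (Sum.inr a) (Sum.inr b))
    (π : Fin n ⊕ Fin n → ℕ) (hπ : Function.Injective π)
    (hcons : ∀ u v : Fin n ⊕ Fin n, u.isLeft = v.isLeft → u ≠ v → ∀ D : Bool × Bool,
      (Nat.card {w : Fin n ⊕ Fin n //
          (if D.1 then E u w else E w u) ∧ (if D.2 then E v w else E w v)} : ℝ)
        ≤ 1.1 * n / 4) :
    Nat.card {a : Fin n //
        (Nat.card {w : Fin n ⊕ Fin n //
            (E (Sum.inl a) w ∧ π (Sum.inl a) < π w) ∨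
              (E w (Sum.inl a) ∧ π w < π (Sum.inl a))} : ℝ) < n / 18} ≤ 1 ∧
    Nat.card {b : Fin n //
        (Nat.card {w : Fin n ⊕ Fin n //
            (E (Sum.inr b) w ∧ π (Sum.inr b) < π w) ∨
              (E w (Sum.inr b) ∧ π w < π (Sum.inr b))} : ℝ) < n / 18} ≤ 1 := by
  classical
  constructor
  · rw [Finite.card_le_one_iff_subsingleton]
    constructor
    rintro ⟨a, ha⟩ ⟨a', ha'⟩
    by_contra hne'
    have hne : a ≠ a' := fun h => hne' (Subtype.ext h)
    have hπne : π (Sum.inl a) ≠ π (Sum.inl a') := by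
      intro h
      exact hne (Sum.inl.inj (hπ h))
    have hhor : ∀ x x' : Fin n, x ≠ x' → π (Sum.inl x) < π (Sum.inl x') →
        (Nat.card {w : Fin n ⊕ Fin n //
          (E (Sum.inl x) w ∧ π (Sum.inl x) < π w) ∨
            (E w (Sum.inl x) ∧ π w < π (Sum.inl x))} : ℝ) < n / 18 →
        (Nat.card {w : Fin n ⊕ Fin n //
          (E (Sum.inl x') w ∧ π (Sum.inl x') < π w) ∨
            (E w (Sum.inl x') ∧ π w < π (Sum.inl x'))} : ℝ) < n / 18 → False := by
      intro x x' hxx hπlt hx hx'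
      exact core_contradiction n hn E π (Sum.inl x) (Sum.inl x') hπlt Sum.inr
        Sum.inr_injective (fun b => hor x b) (fun b => hor x' b)
        (hcons (Sum.inl x) (Sum.inl x') rfl (fun h => hxx (Sum.inl.inj h))) hx hx'
    rcases lt_or_gt_of_ne hπne with h | h
    · exact hhor a a' hne h ha ha'
    · exact hhor a' a (Ne.symm hne) h ha' ha
  · rw [Finite.card_le_one_iff_subsingleton]
    constructor
    rintro ⟨b, hb⟩ ⟨b', hb'⟩
    by_contra hne'
    have hne : b ≠ b' := fun h => hne' (Subtype.ext h)
    have hπne : π (Sum.inr b) ≠ π (Sum.inr b') := by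
      intro h
      exact hne (Sum.inr.inj (hπ h))
    have hone : ∀ x : Fin n, ∀ a : Fin n,
        E (Sum.inr x) (Sum.inl a) ↔ ¬ E (Sum.inl a) (Sum.inr x) := by
      intro x a
      have := hor a x
      tauto
    have hhor : ∀ x x' : Fin n, x ≠ x' → π (Sum.inr x) < π (Sum.inr x') →
        (Nat.card {w : Fin n ⊕ Fin n //
          (E (Sum.inr x) w ∧ π (Sum.inr x) < π w) ∨
            (E w (Sum.inr x) ∧ π w < π (Sum.inr x))} : ℝ) < n / 18 →
        (Nat.card {w : Fin n ⊕ Fin n //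
          (E (Sum.inr x') w ∧ π (Sum.inr x') < π w) ∨
            (E w (Sum.inr x') ∧ π w < π (Sum.inr x'))} : ℝ) < n / 18 → False := by
      intro x x' hxx hπlt hx hx'
      exact core_contradiction n hn E π (Sum.inr x) (Sum.inr x') hπlt Sum.inl
        Sum.inl_injective (fun a => hone x a) (fun a => hone x' a)
        (hcons (Sum.inr x) (Sum.inr x') rfl (fun h => hxx (Sum.inr.inj h))) hx hx'
    rcases lt_or_gt_of_ne hπne with h | h
    · exact hhor b b' hne h hb hb'
    · exact hhor b' b (Ne.symm hne) h hb' hb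
end

section
/- Asymptotically almost surely, a random orientation T of the complete bipartite graph with both parts of size n has the property that every minimal feedback arc set of T contains a matching of size n − 1. -/
open Finset

section AuxiliaryForAas
variable {n : ℕ}


/-- rows of `ω` restricted to columns `B` -/
def rowSet (ω : Fin n → Fin n → Bool) (B : Finset (Fin n)) (a : Fin n) : Finset (Fin n) :=
  B.filter (fun b => ω a b = true)

/-- the rows indexed by `A`, restricted to columns `B`, form a chain -/
def RowChain (ω : Fin n → Fin n → Bool) (A B : Finset (Fin n)) : Prop :=
  ∀ a1 ∈ A, ∀ a2 ∈ A, rowSet ω B a1 ⊆ rowSet ω B a2 ∨ rowSet ω B a2 ⊆ rowSet ω B a1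

lemma rowSet_mono {ω : Fin n → Fin n → Bool} {A B : Finset (Fin n)}
    (hch : RowChain ω A B) {a1 a2 : Fin n} (h1 : a1 ∈ A) (h2 : a2 ∈ A)
    (hc : (rowSet ω B a1).card ≤ (rowSet ω B a2).card) :
    rowSet ω B a1 ⊆ rowSet ω B a2 := by
  rcases hch a1 h1 a2 h2 with h | h
  · exact h
  · rw [Finset.eq_of_subset_of_card_le h hc]

lemma recon {ω : Fin n → Fin n → Bool} {A B : Finset (Fin n)}
    (hch : RowChain ω A B) {a b : Fin n} (ha : a ∈ A) (hb : b ∈ B) :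
    (ω a b = true ↔
      (A.filter (fun a' => (rowSet ω B a).card < (rowSet ω B a').card)).card <
        (A.filter (fun a' => b ∈ rowSet ω B a')).card) := by
  classical
  constructor
  · intro hw
    apply Finset.card_lt_card
    constructor
    · intro a' ha'
      simp only [mem_filter] at ha' ⊢
      exact ⟨ha'.1, rowSet_mono hch ha ha'.1 ha'.2.le (by simp [rowSet, hb, hw])⟩
    · intro hsub
      have := hsub (by simp [ha, rowSet, hb, hw] : a ∈ A.filter (fun a' => b ∈ rowSet ω B a'))
      simp at this
  · intro hlt
    by_contra hw
    have hsub : A.filter (fun a' => b ∈ rowSet ω B a') ⊆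
        A.filter (fun a' => (rowSet ω B a).card < (rowSet ω B a').card) := by
      intro a' ha'
      simp only [mem_filter] at ha' ⊢
      refine ⟨ha'.1, ?_⟩
      by_contra hle
      push_neg at hle
      have := rowSet_mono hch ha'.1 ha hle ha'.2
      simp [rowSet, hb] at this
      exact hw this
    exact absurd (Finset.card_le_card hsub) (by omega)

lemma count_rowchain (A B : Finset (Fin n)) :
    Nat.card {ω : Fin n → Fin n → Bool // RowChain ω A B} ≤
      (B.card + 1) ^ A.card * (A.card + 1) ^ B.card * 2 ^ (n * n - A.card * B.card) := by
  classical
  set T := (↥A → Fin (B.card + 1)) × (↥B → Fin (A.card + 1)) ×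
    (↥((univ ×ˢ univ : Finset (Fin n × Fin n)) \ A ×ˢ B) → Bool) with hT
  have hsd : ((univ ×ˢ univ : Finset (Fin n × Fin n)) \ A ×ˢ B).card = n * n - A.card * B.card := by
    rw [Finset.card_sdiff_of_subset (by intro x _; simp)]
    simp [Finset.card_product]
  have hcard : Nat.card T =
      (B.card + 1) ^ A.card * (A.card + 1) ^ B.card * 2 ^ (n * n - A.card * B.card) := by
    rw [hT, Nat.card_eq_fintype_card, Fintype.card_prod, Fintype.card_prod,
      Fintype.card_fun, Fintype.card_fun, Fintype.card_fun,
      Fintype.card_coe, Fintype.card_coe, Fintype.card_coe, hsd]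
    simp [mul_assoc]
  rw [← hcard]
  apply Nat.card_le_card_of_injective
    (f := fun ω : {ω : Fin n → Fin n → Bool // RowChain ω A B} =>
      (⟨fun a => ⟨(rowSet ω.1 B a).card, Nat.lt_succ_of_le (card_filter_le _ _)⟩,
        fun b => ⟨(A.filter (fun a => (b : Fin n) ∈ rowSet ω.1 B a)).card,
          Nat.lt_succ_of_le (card_filter_le _ _)⟩,
        fun p => ω.1 p.1.1 p.1.2⟩ : T))
  rintro ⟨ω, hω⟩ ⟨ω', hω'⟩ heq
  simp only [Prod.mk.injEq] at heq
  obtain ⟨h1, h2, h3⟩ := heq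
  have hc : ∀ a ∈ A, (rowSet ω B a).card = (rowSet ω' B a).card := by
    intro a ha
    have := congrFun h1 ⟨a, ha⟩
    simpa using congrArg Fin.val this
  have hh : ∀ b ∈ B, (A.filter (fun a => b ∈ rowSet ω B a)).card
      = (A.filter (fun a => b ∈ rowSet ω' B a)).card := by
    intro b hb
    have := congrFun h2 ⟨b, hb⟩
    simpa using congrArg Fin.val this
  have hoff : ∀ a b : Fin n, ¬(a ∈ A ∧ b ∈ B) → ω a b = ω' a b := by
    intro a b hab
    have hmem : (a, b) ∈ (univ ×ˢ univ : Finset (Fin n × Fin n)) \ A ×ˢ B := by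
      simp [Finset.mem_sdiff, Finset.mem_product]
      tauto
    exact congrFun h3 ⟨(a, b), hmem⟩
  apply Subtype.ext
  funext a b
  by_cases hab : a ∈ A ∧ b ∈ B
  · obtain ⟨ha, hb⟩ := hab
    have e1 := recon hω ha hb
    have e2 := recon hω' ha hb
    have hfil : A.filter (fun a' => (rowSet ω B a).card < (rowSet ω B a').card)
        = A.filter (fun a' => (rowSet ω' B a).card < (rowSet ω' B a').card) := by
      apply Finset.filter_congr
      intro a' ha'
      rw [hc a ha, hc a' ha']
    rw [hfil, hh b hb] at e1
    rw [← e2] at e1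
    cases hx : ω a b <;> cases hy : ω' a b <;> simp [hx, hy] at e1 ⊢ <;> tauto
  · exact hoff a b hab

lemma reduction (hn : 2 ≤ n) {ω : Fin n → Fin n → Bool}
    (hbad : ¬ ∃ A B : Finset (Fin n), A.card + B.card = n + 2 ∧ RowChain ω A B)
    (F : (Fin n ⊕ Fin n) → (Fin n ⊕ Fin n) → Prop) (hF : IsFAS (bipEdge ω) F) :
    ∃ M : Finset (Fin n × Fin n), M.card = n - 1 ∧
      (∀ p ∈ M, F (Sum.inl p.1) (Sum.inr p.2) ∨ F (Sum.inr p.2) (Sum.inl p.1)) ∧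
      (∀ p ∈ M, ∀ q ∈ M, p ≠ q → p.1 ≠ q.1 ∧ p.2 ≠ q.2) := by
  classical
  set Gf : Fin n → Finset (Fin n) := fun a =>
    univ.filter (fun b => F (Sum.inl a) (Sum.inr b) ∨ F (Sum.inr b) (Sum.inl a)) with hGf
  -- defect Hall condition
  have hdef : ∀ S : Finset (Fin n), S.card ≤ (S.biUnion Gf).card + 1 := by
    intro S
    by_contra hcon
    push_neg at hcon
    set Nn := S.biUnion Gf with hNn
    have hScard : S.card ≤ n := by
      simpa using card_le_card (subset_univ S)
    have hNcard : Nn.card ≤ n := by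
      simpa using card_le_card (subset_univ Nn)
    have hBex : n + 2 - S.card ≤ (univ \ Nn).card := by
      rw [card_sdiff_of_subset (subset_univ _)]
      simp only [card_univ, Fintype.card_fin]
      omega
    obtain ⟨B, hBsub, hBcard⟩ := Finset.exists_subset_card_eq hBex
    -- no F-edges between S and B
    have hnF : ∀ a ∈ S, ∀ b ∈ B,
        ¬ (F (Sum.inl a) (Sum.inr b) ∨ F (Sum.inr b) (Sum.inl a)) := by
      intro a ha b hb hor
      have hbN : b ∈ Nn := mem_biUnion.mpr ⟨a, ha, by simp [hGf, hor]⟩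
      have := hBsub hb
      simp [mem_sdiff] at this
      exact this hbN
    -- RowChain ω S B
    have hch : RowChain ω S B := by
      intro a1 h1 a2 h2
      by_contra hboth
      push_neg at hboth
      obtain ⟨h12, h21⟩ := hboth
      obtain ⟨b1, hb1mem, hb1not⟩ := Finset.not_subset.mp h12
      obtain ⟨b2, hb2mem, hb2not⟩ := Finset.not_subset.mp h21
      simp only [rowSet, mem_filter] at hb1mem hb2mem
      have hb1B : b1 ∈ B := hb1mem.1
      have hb2B : b2 ∈ B := hb2mem.1
      have hw11 : ω a1 b1 = true := hb1mem.2
      have hw21 : ω a2 b1 = false := by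
        simpa [rowSet, hb1B] using hb1not
      have hw22 : ω a2 b2 = true := hb2mem.2
      have hw12 : ω a1 b2 = false := by
        simpa [rowSet, hb2B] using hb2not
      set r : (Fin n ⊕ Fin n) → (Fin n ⊕ Fin n) → Prop :=
        fun u v => bipEdge ω u v ∧ ¬ F u v with hr
      have e1 : r (Sum.inl a1) (Sum.inr b1) :=
        ⟨hw11, fun hf => hnF a1 h1 b1 hb1B (Or.inl hf)⟩
      have e2 : r (Sum.inr b1) (Sum.inl a2) :=
        ⟨hw21, fun hf => hnF a2 h2 b1 hb1B (Or.inr hf)⟩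
      have e3 : r (Sum.inl a2) (Sum.inr b2) :=
        ⟨hw22, fun hf => hnF a2 h2 b2 hb2B (Or.inl hf)⟩
      have e4 : r (Sum.inr b2) (Sum.inl a1) :=
        ⟨hw12, fun hf => hnF a1 h1 b2 hb2B (Or.inr hf)⟩
      exact hF.2 (Sum.inl a1)
        (Relation.TransGen.tail
          (Relation.TransGen.tail (Relation.TransGen.tail (Relation.TransGen.single e1) e2) e3) e4)
    exact hbad ⟨S, B, by omega, hch⟩
  -- Hall with a dummy vertex
  set t' : Fin n → Finset (Option (Fin n)) := fun a => insert none ((Gf a).image some) with ht'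
  have hall : ∀ s : Finset (Fin n), s.card ≤ (s.biUnion t').card := by
    intro s
    rcases s.eq_empty_or_nonempty with rfl | ⟨a0, ha0⟩
    · simp
    · have hsub : insert (none : Option (Fin n)) ((s.biUnion Gf).image some) ⊆ s.biUnion t' := by
        intro x hx
        rcases mem_insert.mp hx with rfl | hx
        · exact mem_biUnion.mpr ⟨a0, ha0, mem_insert_self _ _⟩
        · obtain ⟨b, hb, rfl⟩ := mem_image.mp hx
          obtain ⟨a, ha, hba⟩ := mem_biUnion.mp hb
          exact mem_biUnion.mpr ⟨a, ha, mem_insert_of_mem (mem_image_of_mem _ hba)⟩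
      have hcardins : (insert (none : Option (Fin n)) ((s.biUnion Gf).image some)).card
          = (s.biUnion Gf).card + 1 := by
        rw [card_insert_of_notMem (by simp), card_image_of_injective _ (Option.some_injective _)]
      calc s.card ≤ (s.biUnion Gf).card + 1 := hdef s
        _ = _ := hcardins.symm
        _ ≤ (s.biUnion t').card := card_le_card hsub
  obtain ⟨f, hfinj, hft⟩ := (Finset.all_card_le_biUnion_card_iff_exists_injective t').mp hall
  set D : Finset (Fin n) := univ.filter (fun a => f a ≠ none) with hD
  have hDcard : n - 1 ≤ D.card := by
    have h1 : (univ.filter (fun a => f a = none)).card ≤ 1 := by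
      apply Finset.card_le_one.mpr
      intro a ha b hb
      simp only [mem_filter] at ha hb
      exact hfinj (ha.2.trans hb.2.symm)
    have h2 := Finset.card_filter_add_card_filter_not
      (s := (univ : Finset (Fin n))) (p := fun a => f a = none)
    simp only [card_univ, Fintype.card_fin] at h2
    have hDeq : D = univ.filter (fun a => ¬ f a = none) := rfl
    rw [← hDeq] at h2
    omega
  obtain ⟨D', hD'sub, hD'card⟩ := Finset.exists_subset_card_eq hDcard
  have hn0 : 0 < n := by omega
  set m : Fin n → Fin n := fun a => (f a).getD ⟨0, hn0⟩ with hm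
  have hkey : ∀ a ∈ D', f a = some (m a) ∧ m a ∈ Gf a := by
    intro a ha
    have haD : f a ≠ none := by
      have := hD'sub ha
      simp [hD] at this
      exact this
    cases hfa : f a with
    | none => exact absurd hfa haD
    | some b =>
      have hmem := hft a
      rw [hfa] at hmem
      rcases mem_insert.mp hmem with h | h
      · exact absurd h (by simp)
      · obtain ⟨b', hb', hbb⟩ := mem_image.mp h
        have hb'b : b' = b := by injection hbb
        have hmb : m a = b := by simp [hm, hfa]
        subst hb'b
        exact ⟨by simp [hfa, hmb], by rwa [hmb]⟩
  refine ⟨D'.image (fun a => (a, m a)), ?_, ?_, ?_⟩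
  · rw [card_image_of_injective _ (fun x y h => congrArg Prod.fst h), hD'card]
  · rintro p hp
    obtain ⟨a, ha, rfl⟩ := mem_image.mp hp
    have := (hkey a ha).2
    simp [hGf] at this
    exact this
  · rintro p hp q hq hpq
    obtain ⟨a, ha, rfl⟩ := mem_image.mp hp
    obtain ⟨a', ha', rfl⟩ := mem_image.mp hq
    have hne : a ≠ a' := fun h => hpq (by rw [h])
    refine ⟨hne, fun hmm => hne (hfinj ?_)⟩
    have hmm' : m a = m a' := hmm
    rw [(hkey a ha).1, (hkey a' ha').1, hmm']


end AuxiliaryForAas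

lemma choose_le_pow' (n : ℕ) : ∀ k, n.choose k ≤ (n+1)^k := by
  intro k
  induction k with
  | zero => simp
  | succ k ih =>
    have h1 : n.choose (k+1) * (k+1) = n.choose k * (n - k) := Nat.choose_succ_right_eq n k
    have h2 : n.choose (k+1) ≤ n.choose (k+1) * (k+1) := Nat.le_mul_of_pos_right _ (by omega)
    have h3 : n.choose k * (n - k) ≤ n.choose k * (n+1) :=
      Nat.mul_le_mul_left _ (by omega)
    calc n.choose (k+1) ≤ n.choose k * (n+1) := by omega
      _ ≤ (n+1)^k * (n+1) := Nat.mul_le_mul_right _ ih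
      _ = (n+1)^(k+1) := by ring

lemma sp5 : ∀ s, 2 ≤ s → (s+1)^5 ≤ 2^(4*s) := by
  intro s hs
  induction s with
  | zero => omega
  | succ s ih =>
    rcases Nat.lt_or_ge s 2 with h | h
    · interval_cases s
      · omega
      · decide
    · have hih := ih h
      have hstep : 3 * (s + 2) ≤ 4 * (s + 1) := by omega
      have h5 : (3 * (s + 2))^5 ≤ (4 * (s + 1))^5 := Nat.pow_le_pow_left hstep 5
      have hexp : 2^(4*(s+1)) = 2^4 * 2^(4*s) := by rw [← pow_add]; ring_nf
      have hb : 243 * (s + 2)^5 ≤ 243 * (16 * (s + 1)^5) := by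
        calc 243 * (s + 2)^5 = (3 * (s + 2))^5 := by ring
          _ ≤ (4 * (s + 1))^5 := h5
          _ = 1024 * (s + 1)^5 := by ring
          _ ≤ 243 * (16 * (s + 1)^5) := by nlinarith [sq_nonneg ((s:ℤ)+1)]
      have hc : (s + 2)^5 ≤ 16 * (s+1)^5 := Nat.le_of_mul_le_mul_left hb (by norm_num)
      calc (s + 1 + 1)^5 = (s + 2)^5 := by ring_nf
        _ ≤ 16 * (s+1)^5 := hc
        _ ≤ 16 * 2^(4*s) := by omega
        _ = 2^(4*(s+1)) := by rw [hexp]; norm_num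

lemma logL : ∀ L, 13 ≤ L → 120 * (L+1) ≤ 2^L := by
  intro L hL
  induction L with
  | zero => omega
  | succ L ih =>
    rcases Nat.lt_or_ge L 13 with h | h
    · have hL12 : L = 12 := by omega
      subst hL12
      decide
    · have hih := ih h
      have h2 : (120:ℕ) ≤ 2^L :=
        le_trans (by omega) hih
      have : 2^(L+1) = 2^L + 2^L := by ring
      omega

lemma big_pow : ∀ n, 2^14 ≤ n → (n+1)^120 ≤ 2^n := by
  intro n hn
  have hn0 : n ≠ 0 := by positivity
  set L := Nat.log 2 n with hL
  have h1 : 2^L ≤ n := Nat.pow_log_le_self 2 hn0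
  have h2 : n < 2^(L+1) := Nat.lt_pow_succ_log_self (by norm_num) n
  have hL14 : 14 ≤ L := (Nat.le_log_iff_pow_le (by norm_num) hn0).mpr hn
  have h3 : 120 * (L+1) ≤ 2^L := logL (L+1-1) (by omega)
  calc (n+1)^120 ≤ (2^(L+1))^120 := Nat.pow_le_pow_left (by omega) _
    _ = 2^((L+1)*120) := by rw [← pow_mul]
    _ ≤ 2^n := Nat.pow_le_pow_right (by norm_num) (by omega)

lemma cm_le (c m : ℕ) (hc : 0 < c) (hm : c*c + c ≤ m) : c * (m+1) ≤ 2^m := by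
  have hcm : c ≤ m := by nlinarith
  have h1 : 2^m = 2^c * 2^(m-c) := by rw [← pow_add]; congr 1; omega
  have h2 : c + 1 ≤ 2^c := Nat.lt_two_pow_self (n := c)
  have h3 : (m - c) + 1 ≤ 2^(m-c) := Nat.lt_two_pow_self
  have h4 : c * (m+1) ≤ (c+1) * ((m-c)+1) := by
    have hd : c*c ≤ m - c := by omega
    nlinarith [Nat.sub_add_cancel hcm]
  calc c * (m+1) ≤ (c+1) * ((m-c)+1) := h4
    _ ≤ 2^c * 2^(m-c) := Nat.mul_le_mul h2 h3
    _ = 2^m := h1.symm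

lemma key (n s t : ℕ) (hn : 2^14 ≤ n) (hs : 2 ≤ s) (hst : s ≤ t) (hsum : s + t = n + 2) :
    (n.choose s * n.choose t * (t+1)^s * (s+1)^t) * 2^(n/5) ≤ 2^(s*t) := by
  have ht2 : 2 ≤ t := le_trans hs hst
  have htn : t ≤ n := by omega
  have hcs : n.choose s ≤ (n+1)^s := choose_le_pow' n s
  have hct : n.choose t ≤ (n+1)^s := by
    have h1 : n.choose t = n.choose (n - t) := by rw [Nat.choose_symm htn]
    have h2 : n - t = s - 2 := by omega
    rw [h1, h2]
    exact le_trans (choose_le_pow' n (s-2)) (Nat.pow_le_pow_right (by omega) (by omega))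
  have hts : (t+1)^s ≤ (n+1)^s := Nat.pow_le_pow_left (by omega) _
  have hD : n.choose s * n.choose t * (t+1)^s * (s+1)^t ≤ (n+1)^(3*s) * (s+1)^t := by
    calc n.choose s * n.choose t * (t+1)^s * (s+1)^t
        ≤ (n+1)^s * (n+1)^s * (n+1)^s * (s+1)^t :=
          Nat.mul_le_mul (Nat.mul_le_mul (Nat.mul_le_mul hcs hct) hts) le_rfl
      _ = (n+1)^(3*s) * (s+1)^t := by rw [← pow_add, ← pow_add, show s+s+s = 3*s by ring]
  have hC4 : n*s + 4*n ≤ 4*(s*t) := by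
    have e1 : s*s ≤ s*t := Nat.mul_le_mul_left s hst
    have e2 : 2*t ≤ s*t := Nat.mul_le_mul_right t hs
    have e3 : 2*s ≤ s*t := by
      calc 2*s = s*2 := by ring
        _ ≤ s*t := Nat.mul_le_mul_left s ht2
    nlinarith
  have h30 : (n+1)^(30*s) * 2^n ≤ 2^(s*t) := by
    have hb : (n+1)^120 ≤ 2^n := big_pow n hn
    have h4 : ((n+1)^(30*s) * 2^n)^4 ≤ (2^(s*t))^4 := by
      calc ((n+1)^(30*s) * 2^n)^4 = ((n+1)^120)^s * (2^n)^4 := by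
            rw [mul_pow, ← pow_mul, show 30*s*4 = 120*s by ring, pow_mul]
        _ ≤ (2^n)^s * (2^n)^4 := Nat.mul_le_mul_right _ (Nat.pow_le_pow_left hb s)
        _ = 2^(n*s + 4*n) := by rw [← pow_mul, ← pow_mul, ← pow_add, show n*s + 4*n = n*s + n*4 by ring]
        _ ≤ 2^(4*(s*t)) := Nat.pow_le_pow_right (by norm_num) hC4
        _ = (2^(s*t))^4 := by rw [← pow_mul, show 4*(s*t) = s*t*4 by ring]
    exact (Nat.pow_le_pow_iff_left (by norm_num)).mp h4
  have h5t : (s+1)^(5*t) ≤ 2^(4*(s*t)) := by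
    calc (s+1)^(5*t) = ((s+1)^5)^t := by rw [show 5*t = 5*t by rfl, pow_mul]
      _ ≤ (2^(4*s))^t := Nat.pow_le_pow_left (sp5 s hs) t
      _ = 2^(4*(s*t)) := by rw [← pow_mul, show 4*s*t = 4*(s*t) by ring]
  have hfin : ((n.choose s * n.choose t * (t+1)^s * (s+1)^t) * 2^(n/5))^5 ≤ (2^(s*t))^5 := by
    have hn5 : (2^(n/5) : ℕ)^5 ≤ 2^n := by
      rw [← pow_mul]
      exact Nat.pow_le_pow_right (by norm_num) (Nat.div_mul_le_self n 5)
    calc ((n.choose s * n.choose t * (t+1)^s * (s+1)^t) * 2^(n/5))^5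
        = (n.choose s * n.choose t * (t+1)^s * (s+1)^t)^5 * (2^(n/5))^5 := by rw [mul_pow]
      _ ≤ ((n+1)^(3*s) * (s+1)^t)^5 * 2^n :=
          Nat.mul_le_mul (Nat.pow_le_pow_left hD 5) hn5
      _ = (n+1)^(15*s) * (s+1)^(5*t) * 2^n := by
          rw [mul_pow, ← pow_mul, ← pow_mul, show 3*s*5 = 15*s by ring, show t*5 = 5*t by ring]
      _ ≤ (n+1)^(30*s) * 2^(4*(s*t)) * 2^n := by
          exact Nat.mul_le_mul (Nat.mul_le_mul
            (Nat.pow_le_pow_right (by omega) (by omega)) h5t) le_rfl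
      _ = ((n+1)^(30*s) * 2^n) * 2^(4*(s*t)) := by ring
      _ ≤ 2^(s*t) * 2^(4*(s*t)) := Nat.mul_le_mul_right _ h30
      _ = (2^(s*t))^5 := by rw [← pow_add, show s*t + 4*(s*t) = s*t*5 by ring, pow_mul]
  exact (Nat.pow_le_pow_iff_left (by norm_num)).mp hfin

lemma total_bound (n : ℕ) (hn : 2^14 ≤ n) :
    Nat.card {ω : Fin n → Fin n → Bool //
        ∃ A B : Finset (Fin n), A.card + B.card = n + 2 ∧ RowChain ω A B}
      * 2^(n/5) ≤ (n+1) * 2^(n*n) := by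
  classical
  set P : (Fin n → Fin n → Bool) → Prop :=
    fun ω => ∃ A B : Finset (Fin n), A.card + B.card = n + 2 ∧ RowChain ω A B with hP
  set Pairs : Finset (Finset (Fin n) × Finset (Fin n)) :=
    univ.filter (fun AB => AB.1.card + AB.2.card = n + 2) with hPairs
  have hbridge : (univ.filter P).card = Nat.card {ω // P ω} := by
    rw [Nat.card_eq_fintype_card, Fintype.card_subtype]
  have hbridge2 : ∀ AB : Finset (Fin n) × Finset (Fin n),
      (univ.filter (fun ω => RowChain ω AB.1 AB.2)).card
        = Nat.card {ω : Fin n → Fin n → Bool // RowChain ω AB.1 AB.2} := by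
    intro AB
    rw [Nat.card_eq_fintype_card, Fintype.card_subtype]
  have hsub : univ.filter P ⊆
      Pairs.biUnion (fun AB => univ.filter (fun ω => RowChain ω AB.1 AB.2)) := by
    intro ω hω
    simp only [hP, mem_filter, mem_univ, true_and] at hω
    obtain ⟨A, B, hcard, hch⟩ := hω
    exact mem_biUnion.mpr ⟨(A, B), by simp [hPairs, hcard], by simp [hch]⟩
  set g : Finset (Fin n) × Finset (Fin n) → ℕ :=
    fun AB => (AB.2.card + 1) ^ AB.1.card * (AB.1.card + 1) ^ AB.2.card *
      2 ^ (n * n - AB.1.card * AB.2.card) with hg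
  have step1 : (univ.filter P).card ≤ ∑ AB ∈ Pairs, g AB := by
    calc (univ.filter P).card
        ≤ (Pairs.biUnion (fun AB => univ.filter (fun ω => RowChain ω AB.1 AB.2))).card :=
          card_le_card hsub
      _ ≤ ∑ AB ∈ Pairs, (univ.filter (fun ω => RowChain ω AB.1 AB.2)).card :=
          card_biUnion_le
      _ ≤ ∑ AB ∈ Pairs, g AB := by
          apply Finset.sum_le_sum
          intro AB _
          rw [hbridge2 AB]
          exact count_rowchain AB.1 AB.2
  -- fiberwise
  have step2 : ∑ AB ∈ Pairs, g AB
      = ∑ s ∈ range (n+1), ∑ AB ∈ Pairs.filter (fun AB => AB.1.card = s), g AB := by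
    apply (Finset.sum_fiberwise_of_maps_to ?_ g).symm
    intro AB hAB
    simp only [mem_range]
    have : AB.1.card ≤ n := by simpa using card_le_card (subset_univ AB.1)
    omega
  -- per fiber
  have step3 : ∀ s ∈ range (n+1),
      (∑ AB ∈ Pairs.filter (fun AB => AB.1.card = s), g AB) * 2^(n/5) ≤ 2^(n*n) := by
    intro s hs
    simp only [mem_range] at hs
    set t := n + 2 - s with ht
    have hfibsub : Pairs.filter (fun AB => AB.1.card = s) ⊆
        (univ.powersetCard s) ×ˢ (univ.powersetCard t) := by
      intro AB hAB
      simp only [mem_filter, hPairs, mem_univ, true_and] at hAB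
      obtain ⟨hsum, hcA⟩ := hAB
      simp only [mem_product, mem_powersetCard]
      exact ⟨⟨subset_univ _, hcA⟩, ⟨subset_univ _, by omega⟩⟩
    have hfibcard : (Pairs.filter (fun AB => AB.1.card = s)).card ≤ n.choose s * n.choose t := by
      calc (Pairs.filter (fun AB => AB.1.card = s)).card
          ≤ ((univ.powersetCard s) ×ˢ (univ.powersetCard t)).card := card_le_card hfibsub
        _ = n.choose s * n.choose t := by
            rw [card_product, card_powersetCard, card_powersetCard, card_univ, Fintype.card_fin]
    have hGconst : ∀ AB ∈ Pairs.filter (fun AB => AB.1.card = s),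
        g AB = (t+1)^s * (s+1)^t * 2^(n*n - s*t) := by
      intro AB hAB
      simp only [mem_filter, hPairs, mem_univ, true_and] at hAB
      obtain ⟨hsum, hcA⟩ := hAB
      have hcB : AB.2.card = t := by omega
      simp [hg, hcA, hcB]
    have hsum1 : (∑ AB ∈ Pairs.filter (fun AB => AB.1.card = s), g AB)
        ≤ (n.choose s * n.choose t) * ((t+1)^s * (s+1)^t * 2^(n*n - s*t)) := by
      calc ∑ AB ∈ Pairs.filter (fun AB => AB.1.card = s), g AB
          = ∑ _AB ∈ Pairs.filter (fun AB => AB.1.card = s),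
            ((t+1)^s * (s+1)^t * 2^(n*n - s*t)) := Finset.sum_congr rfl hGconst
        _ = (Pairs.filter (fun AB => AB.1.card = s)).card *
            ((t+1)^s * (s+1)^t * 2^(n*n - s*t)) := by rw [Finset.sum_const, smul_eq_mul]
        _ ≤ (n.choose s * n.choose t) * ((t+1)^s * (s+1)^t * 2^(n*n - s*t)) :=
            Nat.mul_le_mul_right _ hfibcard
    rcases Nat.lt_or_ge s 2 with hs2 | hs2
    · have hzero : n.choose t = 0 := Nat.choose_eq_zero_of_lt (by omega)
      have : (∑ AB ∈ Pairs.filter (fun AB => AB.1.card = s), g AB) = 0 := by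
        have := hsum1
        rw [hzero] at this
        simpa using this
      rw [this]
      simp
    · have ht2 : 2 ≤ t := by omega
      have hsumst : s + t = n + 2 := by omega
      have hkey : (n.choose s * n.choose t * ((t+1)^s * (s+1)^t)) * 2^(n/5) ≤ 2^(s*t) := by
        rcases le_total s t with h | h
        · have hk := key n s t hn hs2 h hsumst
          calc n.choose s * n.choose t * ((t+1)^s * (s+1)^t) * 2^(n/5)
              = (n.choose s * n.choose t * (t+1)^s * (s+1)^t) * 2^(n/5) := by ring
            _ ≤ 2^(s*t) := hk
        · have hk := key n t s hn ht2 h (by omega)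
          calc n.choose s * n.choose t * ((t+1)^s * (s+1)^t) * 2^(n/5)
              = (n.choose t * n.choose s * (s+1)^t * (t+1)^s) * 2^(n/5) := by ring
            _ ≤ 2^(t*s) := hk
            _ = 2^(s*t) := by rw [Nat.mul_comm]
      have hstnn : s*t ≤ n*n := Nat.mul_le_mul (by omega) (by omega)
      calc (∑ AB ∈ Pairs.filter (fun AB => AB.1.card = s), g AB) * 2^(n/5)
          ≤ ((n.choose s * n.choose t) * ((t+1)^s * (s+1)^t * 2^(n*n - s*t))) * 2^(n/5) :=
            Nat.mul_le_mul_right _ hsum1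
        _ = ((n.choose s * n.choose t * ((t+1)^s * (s+1)^t)) * 2^(n/5)) * 2^(n*n - s*t) := by
            ring
        _ ≤ 2^(s*t) * 2^(n*n - s*t) := Nat.mul_le_mul_right _ hkey
        _ = 2^(n*n) := by rw [← pow_add]; congr 1; omega
  calc Nat.card {ω : Fin n → Fin n → Bool // P ω} * 2^(n/5)
      = (univ.filter P).card * 2^(n/5) := by rw [hbridge]
    _ ≤ (∑ AB ∈ Pairs, g AB) * 2^(n/5) := Nat.mul_le_mul_right _ step1
    _ = (∑ s ∈ range (n+1), ∑ AB ∈ Pairs.filter (fun AB => AB.1.card = s), g AB) * 2^(n/5) := by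
        rw [step2]
    _ = ∑ s ∈ range (n+1),
        (∑ AB ∈ Pairs.filter (fun AB => AB.1.card = s), g AB) * 2^(n/5) := by
        rw [Finset.sum_mul]
    _ ≤ ∑ _s ∈ range (n+1), 2^(n*n) := Finset.sum_le_sum step3
    _ = (n+1) * 2^(n*n) := by rw [Finset.sum_const, card_range, smul_eq_mul]


/-- Asymptotically almost surely, a random orientation of `K_{n,n}` has the property that
every minimal feedback arc set of it contains a matching of size `n − 1` (a set of
`n − 1` pairwise vertex-disjoint edges). -/
theorem aas_every_min_fas_has_large_matching :
    ∀ ε : ℝ, 0 < ε → ∃ N : ℕ, ∀ n ≥ N,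
      (Nat.card {ω : Fin n → Fin n → Bool //
          ¬ ∀ F : (Fin n ⊕ Fin n) → (Fin n ⊕ Fin n) → Prop,
            IsMinFAS (bipEdge ω) F →
              ∃ M : Finset (Fin n × Fin n), M.card = n - 1 ∧
                (∀ p ∈ M, F (Sum.inl p.1) (Sum.inr p.2) ∨ F (Sum.inr p.2) (Sum.inl p.1)) ∧
                (∀ p ∈ M, ∀ q ∈ M, p ≠ q → p.1 ≠ q.1 ∧ p.2 ≠ q.2)} : ℝ)
        ≤ ε * 2 ^ (n * n) := by
  intro ε hε
  -- choose k with 1 ≤ ε * 2^k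
  obtain ⟨k, hk⟩ : ∃ k : ℕ, (1:ℝ) ≤ ε * 2^k := by
    refine ⟨⌈1/ε⌉₊, ?_⟩
    have h1 : (1:ℝ)/ε ≤ (⌈1/ε⌉₊ : ℝ) := Nat.le_ceil _
    have h2 : ((⌈1/ε⌉₊ : ℕ) : ℝ) ≤ (2:ℝ)^(⌈1/ε⌉₊ : ℕ) := by
      have := Nat.lt_two_pow_self (n := (⌈1/ε⌉₊ : ℕ))
      exact_mod_cast this.le
    have h3 : (1:ℝ)/ε ≤ 2^(⌈1/ε⌉₊ : ℕ) := le_trans h1 h2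
    rw [div_le_iff₀ hε] at h3
    linarith
  obtain ⟨c, hc⟩ : ∃ c : ℕ, c = 5 * 2^k := ⟨5 * 2^k, rfl⟩
  refine ⟨max (2^14) (5*(c*c+c)+5), ?_⟩
  intro n hnN
  have hn14 : 2^14 ≤ n := le_trans (le_max_left _ _) hnN
  have hn5 : 5*(c*c+c)+5 ≤ n := le_trans (le_max_right _ _) hnN
  have hn2 : 2 ≤ n := by
    have : (2:ℕ)^14 = 16384 := by norm_num
    omega
  obtain ⟨m, hm⟩ : ∃ m : ℕ, m = n / 5 := ⟨n / 5, rfl⟩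
  have hdm := Nat.div_add_mod n 5
  have hmod : n % 5 < 5 := Nat.mod_lt _ (by norm_num)
  have hn1 : n + 1 ≤ 5*(m+1) := by omega
  have hcpos : 0 < c := by rw [hc]; positivity
  have hmge : c*c + c ≤ m := by
    have h1 : (5*(c*c+c+1))/5 = c*c+c+1 := Nat.mul_div_cancel_left _ (by norm_num)
    have h2 : (5*(c*c+c+1))/5 ≤ n/5 := Nat.div_le_div_right (by omega)
    omega
  have hcm : c * (m+1) ≤ 2^m := cm_le c m hcpos hmge
  have h2k : 2^k * (n+1) ≤ 2^m := by
    calc 2^k * (n+1) ≤ 2^k * (5*(m+1)) := Nat.mul_le_mul_left _ hn1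
      _ = c * (m+1) := by rw [hc]; ring
      _ ≤ 2^m := hcm
  -- injection into the chain event
  have hA : Nat.card {ω : Fin n → Fin n → Bool //
      ¬ ∀ F : (Fin n ⊕ Fin n) → (Fin n ⊕ Fin n) → Prop,
        IsMinFAS (bipEdge ω) F →
          ∃ M : Finset (Fin n × Fin n), M.card = n - 1 ∧
            (∀ p ∈ M, F (Sum.inl p.1) (Sum.inr p.2) ∨ F (Sum.inr p.2) (Sum.inl p.1)) ∧
            (∀ p ∈ M, ∀ q ∈ M, p ≠ q → p.1 ≠ q.1 ∧ p.2 ≠ q.2)} ≤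
      Nat.card {ω : Fin n → Fin n → Bool //
        ∃ A B : Finset (Fin n), A.card + B.card = n + 2 ∧ RowChain ω A B} := by
    apply Nat.card_le_card_of_injective
      (f := fun x => (⟨x.1, by
        by_contra hno
        exact x.2 (fun F hF => reduction hn2 hno F hF.1)⟩ : {ω : Fin n → Fin n → Bool //
          ∃ A B : Finset (Fin n), A.card + B.card = n + 2 ∧ RowChain ω A B}))
    rintro ⟨x, hx⟩ ⟨y, hy⟩ hxy
    simpa using hxy
  have hB := total_bound n hn14
  rw [← hm] at hB
  set Bad : ℕ := Nat.card {ω : Fin n → Fin n → Bool //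
      ¬ ∀ F : (Fin n ⊕ Fin n) → (Fin n ⊕ Fin n) → Prop,
        IsMinFAS (bipEdge ω) F →
          ∃ M : Finset (Fin n × Fin n), M.card = n - 1 ∧
            (∀ p ∈ M, F (Sum.inl p.1) (Sum.inr p.2) ∨ F (Sum.inr p.2) (Sum.inl p.1)) ∧
            (∀ p ∈ M, ∀ q ∈ M, p ≠ q → p.1 ≠ q.1 ∧ p.2 ≠ q.2)} with hBad
  have hNat : 2^k * Bad ≤ 2^(n*n) := by
    have h1 : 2^k * Bad * 2^m ≤ 2^k * ((n+1) * 2^(n*n)) := by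
      calc 2^k * Bad * 2^m = 2^k * (Bad * 2^m) := by ring
        _ ≤ 2^k * (Nat.card {ω : Fin n → Fin n → Bool //
              ∃ A B : Finset (Fin n), A.card + B.card = n + 2 ∧ RowChain ω A B} * 2^m) :=
            Nat.mul_le_mul_left _ (Nat.mul_le_mul_right _ hA)
        _ ≤ 2^k * ((n+1) * 2^(n*n)) := Nat.mul_le_mul_left _ hB
    have h2 : 2^k * ((n+1) * 2^(n*n)) = (2^k * (n+1)) * 2^(n*n) := by ring
    have h3 : 2^k * Bad * 2^m ≤ 2^m * 2^(n*n) := by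
      calc 2^k * Bad * 2^m ≤ (2^k * (n+1)) * 2^(n*n) := by rw [← h2]; exact h1
        _ ≤ 2^m * 2^(n*n) := Nat.mul_le_mul_right _ h2k
    have h4 : (2^k * Bad) * 2^m ≤ (2^(n*n)) * 2^m := by
      calc (2^k * Bad) * 2^m ≤ 2^m * 2^(n*n) := h3
        _ = (2^(n*n)) * 2^m := by ring
    exact Nat.le_of_mul_le_mul_right h4 (Nat.pow_pos (n := m) (by norm_num))
  have hc' : (2:ℝ)^k * (Bad : ℝ) ≤ 2^(n*n) := by exact_mod_cast hNat
  have h2kpos : (0:ℝ) < 2^k := by positivity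
  have hstep : (2:ℝ)^k * (Bad : ℝ) ≤ 2^k * (ε * 2^(n*n)) := by
    calc (2:ℝ)^k * (Bad : ℝ) ≤ 2^(n*n) := hc'
      _ = 1 * 2^(n*n) := (one_mul _).symm
      _ ≤ (ε * 2^k) * 2^(n*n) := mul_le_mul_of_nonneg_right hk (by positivity)
      _ = 2^k * (ε * 2^(n*n)) := by ring
  exact le_of_mul_le_mul_left hstep h2kpos
end

section
/- Let H be a balanced bipartite graph with parts of size N, minimum degree at least δN with 0 < δ < 1/2, and suppose there exists ε with 0 < ε ≤ δ such that for all subsets R of one part and S of the other part with |R| ≥ εN and |S| ≥ εN, there are at least one edge of H between R and S. Then H has a perfect matching. -/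
/-- Hall-type matching lemma: a balanced bipartite graph with parts of size `N`, minimum
degree at least `δN` (`0 < δ < 1/2`), such that for some `0 < ε ≤ δ` every pair of sets
`R`, `S` on opposite sides with `|R| ≥ εN` and `|S| ≥ εN` is joined by an edge, has a
perfect matching. -/
theorem balanced_bipartite_perfect_matching {α β : Type*} [Fintype α] [Fintype β]
    (N : ℕ) (hα : Fintype.card α = N) (hβ : Fintype.card β = N)
    (Adj : α → β → Prop) (δ : ℝ) (hδ0 : 0 < δ) (hδ2 : δ < 1 / 2)
    (hdegA : ∀ a : α, δ * N ≤ Nat.card {b : β // Adj a b})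
    (hdegB : ∀ b : β, δ * N ≤ Nat.card {a : α // Adj a b})
    (hexp : ∃ ε : ℝ, 0 < ε ∧ ε ≤ δ ∧
      ∀ (R : Finset α) (S : Finset β), ε * N ≤ R.card → ε * N ≤ S.card →
        ∃ a ∈ R, ∃ b ∈ S, Adj a b) :
    ∃ e : α ≃ β, ∀ a : α, Adj a (e a) := by
  classical
  obtain ⟨ε, hε0, hεδ, hE⟩ := hexp
  set t : α → Finset β := fun a => Finset.univ.filter (fun b => Adj a b) with ht
  have hta : ∀ a, (δ * N : ℝ) ≤ (t a).card := by
    intro a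
    have := hdegA a
    rwa [Nat.card_eq_fintype_card, Fintype.card_subtype] at this
  have htb : ∀ b : β, (δ * N : ℝ) ≤ ((Finset.univ.filter (fun a => Adj a b)).card : ℝ) := by
    intro b
    have := hdegB b
    rwa [Nat.card_eq_fintype_card, Fintype.card_subtype] at this
  have hall : ∀ R : Finset α, R.card ≤ (R.biUnion t).card := by
    intro R
    set S := R.biUnion t with hS
    rcases R.eq_empty_or_nonempty with rfl | ⟨a0, ha0⟩
    · simp
    by_cases hRsmall : (R.card : ℝ) ≤ δ * N
    · -- small case: use min degree of a0
      have hsub : t a0 ⊆ S := Finset.subset_biUnion_of_mem t ha0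
      have : (R.card : ℝ) ≤ (S.card : ℝ) :=
        le_trans hRsmall (le_trans (hta a0) (by exact_mod_cast Finset.card_le_card hsub))
      exact_mod_cast this
    push_neg at hRsmall
    -- R is large: |R| > δN ≥ εN
    set T := Sᶜ with hT
    have hTsmall : (T.card : ℝ) < ε * N := by
      by_contra h
      push_neg at h
      obtain ⟨a, haR, b, hbT, hab⟩ := hE R T
        (le_of_lt (lt_of_le_of_lt (mul_le_mul_of_nonneg_right hεδ (Nat.cast_nonneg N)) hRsmall)) h
      have : b ∈ S := Finset.mem_biUnion.mpr ⟨a, haR, by simp [ht, hab]⟩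
      exact (Finset.mem_compl.mp hbT) this
    rcases T.eq_empty_or_nonempty with hTe | ⟨b0, hb0⟩
    · have : S = Finset.univ := by
        rwa [← Finset.compl_eq_empty_iff]
      rw [this, Finset.card_univ, hβ]
      calc R.card ≤ Fintype.card α := Finset.card_le_univ R
        _ = N := hα
    · -- T nonempty: neighbors of b0 avoid R
      have hdisj : Disjoint (Finset.univ.filter (fun a => Adj a b0)) R := by
        rw [Finset.disjoint_left]
        intro a ha haR
        have hadj : Adj a b0 := (Finset.mem_filter.mp ha).2
        have : b0 ∈ S := Finset.mem_biUnion.mpr ⟨a, haR, by simp [ht, hadj]⟩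
        exact (Finset.mem_compl.mp hb0) this
      have hsum : (Finset.univ.filter (fun a => Adj a b0)).card + R.card ≤ N := by
        rw [← Finset.card_union_of_disjoint hdisj, ← hα]
        exact Finset.card_le_univ _
      have h1 : δ * N + (R.card : ℝ) ≤ N := by
        have := htb b0
        have h2 : ((Finset.univ.filter (fun a => Adj a b0)).card : ℝ) + R.card ≤ N := by
          exact_mod_cast hsum
        linarith
      have hTδ : (T.card : ℝ) < δ * N :=
        lt_of_lt_of_le hTsmall (mul_le_mul_of_nonneg_right hεδ (Nat.cast_nonneg N))
      have hRS : (R.card : ℝ) < (S.card : ℝ) := by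
        have hcompl : (S.card : ℝ) + T.card = N := by
          have := Finset.card_add_card_compl S
          rw [hβ] at this
          exact_mod_cast this
        linarith
      exact_mod_cast hRS.le
  obtain ⟨f, hfinj, hft⟩ := (Finset.all_card_le_biUnion_card_iff_exists_injective t).mp hall
  have hbij : Function.Bijective f := by
    rw [Fintype.bijective_iff_injective_and_card]
    exact ⟨hfinj, by rw [hα, hβ]⟩
  refine ⟨Equiv.ofBijective f hbij, fun a => ?_⟩
  have := hft a
  simpa [ht] using this
end

section
/- Let T be a k-partite tournament with parts A_1,…,A_k of size n and let π be a permutation of the vertices. Suppose that for every 1 ≤ s,ℓ ≤ k, every sequence of q ≤ 2 distinct vertices of A_ℓ, and every D ∈ {+,−}^q, the number of vertices of A_s simultaneously D-consistent with the sequence is at most n·2^{−q} + n^{2/3}. If 3n/4 + 3n^{2/3} < 15n/17, then for every 1 ≤ r ≤ k there are at most k − 1 vertices v ∈ A_r failing the property that for every i ≠ r, v has at least n/17 neighbors of A_i in L_π(T). -/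
/-- Let `T = (E)` be a `k`-partite tournament with parts `A_i = {i} × Fin n` and `π` an
injective vertex labelling.  Suppose that for all parts `s, ℓ`, every sequence of `q ≤ 2`
distinct vertices of `A_ℓ` and every sign pattern `D`, the number of vertices of `A_s`
`D`-consistent with the sequence is at most `n·2^{−q} + n^{2/3}`, and that
`3n/4 + 3n^{2/3} < 15n/17`.  Then for every `r` at most `k − 1` vertices `v` of `A_r`
fail to have, for every `i ≠ r`, at least `n/17` neighbors of `A_i` in `L_π(T)`. -/
theorem at_most_k_minus_one_unfriendly_vertices (k n : ℕ)
    (E : (Fin k × Fin n) → (Fin k × Fin n) → Prop)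
    (hsame : ∀ u v : Fin k × Fin n, u.1 = v.1 → ¬ E u v)
    (hcross : ∀ u v : Fin k × Fin n, u.1 ≠ v.1 → (E u v ↔ ¬ E v u))
    (π : Fin k × Fin n → ℕ) (hπ : Function.Injective π)
    (hcons : ∀ s ℓ : Fin k, ∀ q : ℕ, q ≤ 2 → ∀ vs : Fin q → Fin n,
      Function.Injective vs → ∀ D : Fin q → Bool,
      (Nat.card {w : Fin n // ∀ j : Fin q,
          if D j then E (ℓ, vs j) (s, w) else E (s, w) (ℓ, vs j)} : ℝ)
        ≤ (n : ℝ) / 2 ^ q + (n : ℝ) ^ ((2 : ℝ) / 3))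
    (hn : 3 * (n : ℝ) / 4 + 3 * (n : ℝ) ^ ((2 : ℝ) / 3) < 15 * (n : ℝ) / 17) :
    ∀ r : Fin k,
      Nat.card {v : Fin n // ¬ ∀ i : Fin k, i ≠ r →
        (n : ℝ) / 17 ≤ Nat.card {w : Fin n //
          (E (r, v) (i, w) ∧ π (r, v) < π (i, w)) ∨
            (E (i, w) (r, v) ∧ π (i, w) < π (r, v))}} ≤ k - 1 := by
  classical
  intro r
  -- abbreviation for the neighborhood predicate
  set nb : Fin n → Fin k → Fin n → Prop := fun v i w =>
    (E (r, v) (i, w) ∧ π (r, v) < π (i, w)) ∨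
      (E (i, w) (r, v) ∧ π (i, w) < π (r, v)) with hnbdef
  -- generic counting helpers for `Nat.card` of subtypes of `Fin n`
  have cardcompl : ∀ p : Fin n → Prop,
      Nat.card {w : Fin n // p w} + Nat.card {w : Fin n // ¬ p w} = n := by
    intro p
    rw [Nat.card_eq_fintype_card, Nat.card_eq_fintype_card]
    have h1 : Fintype.card {w : Fin n // ¬ p w} =
        Fintype.card (Fin n) - Fintype.card {w : Fin n // p w} :=
      Fintype.card_subtype_compl _
    have h2 : Fintype.card {w : Fin n // p w} ≤ Fintype.card (Fin n) :=
      Fintype.card_subtype_le _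
    simp only [Fintype.card_fin] at h1 h2
    omega
  have cardmono : ∀ p q : Fin n → Prop, (∀ w, p w → q w) →
      Nat.card {w : Fin n // p w} ≤ Nat.card {w : Fin n // q w} := by
    intro p q hpq
    rw [Nat.card_eq_fintype_card, Nat.card_eq_fintype_card]
    exact Fintype.card_subtype_mono p q hpq
  have cardor : ∀ p q : Fin n → Prop,
      Nat.card {w : Fin n // p w ∨ q w} ≤
        Nat.card {w : Fin n // p w} + Nat.card {w : Fin n // q w} := by
    intro p q
    simp only [Nat.card_eq_fintype_card, Fintype.card_subtype]
    rw [Finset.filter_or]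
    exact Finset.card_union_le _ _
  -- The key counting lemma
  have key : ∀ v v' : Fin n, v ≠ v' → ∀ i : Fin k, i ≠ r →
      π (r, v) < π (r, v') →
      (Nat.card {w : Fin n // nb v i w} : ℝ) < (n : ℝ) / 17 →
      (Nat.card {w : Fin n // nb v' i w} : ℝ) < (n : ℝ) / 17 → False := by
    intro v v' hvv' i hir hlt h1 h2
    have hinj : Function.Injective ![v, v'] := by
      intro a b hab
      fin_cases a <;> fin_cases b <;>
        first
          | rfl
          | (exact absurd (by simpa using hab) hvv')
          | (exact absurd (by simpa using hab.symm) hvv')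
    -- pattern predicates
    set pat : (Fin 2 → Bool) → Fin n → Prop := fun D w => ∀ j : Fin 2,
      if D j then E (r, ![v, v'] j) (i, w) else E (i, w) (r, ![v, v'] j) with hpatdef
    have hbound : ∀ D : Fin 2 → Bool,
        (Nat.card {w : Fin n // pat D w} : ℝ) ≤ (n : ℝ) / 4 + (n : ℝ) ^ ((2 : ℝ) / 3) := by
      intro D
      have hthis := hcons i r 2 le_rfl ![v, v'] hinj D
      have h4 : (n : ℝ) / 2 ^ (2 : ℕ) = (n : ℝ) / 4 := by norm_num
      rw [h4] at hthis
      exact hthis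
    -- covering of the common non-neighborhood by three patterns
    have hcover : ∀ w : Fin n, ¬ (nb v i w ∨ nb v' i w) →
        pat ![true, true] w ∨ pat ![false, true] w ∨ pat ![false, false] w := by
      intro w hw
      have hnv : ¬ nb v i w := fun h => hw (Or.inl h)
      have hnv' : ¬ nb v' i w := fun h => hw (Or.inr h)
      have hri : (r : Fin k) ≠ i := fun h => hir h.symm
      have htot : ∀ u : Fin n, E (r, u) (i, w) ↔ ¬ E (i, w) (r, u) := by
        intro u
        exact hcross (r, u) (i, w) (by simpa using hri)
      have hπne : ∀ u : Fin n, π (r, u) ≠ π (i, w) := by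
        intro u h
        have := hπ h
        exact hri (congrArg Prod.fst this)
      have hv : (E (r, v) (i, w) ∧ π (i, w) < π (r, v)) ∨
          (E (i, w) (r, v) ∧ π (r, v) < π (i, w)) := by
        by_cases hE : E (r, v) (i, w)
        · left
          refine ⟨hE, ?_⟩
          have hx : ¬ π (r, v) < π (i, w) := fun h => hnv (Or.inl ⟨hE, h⟩)
          exact lt_of_le_of_ne (not_lt.mp hx) (hπne v).symm
        · right
          have hE' : E (i, w) (r, v) := by
            by_contra h
            exact hE ((htot v).mpr h)
          refine ⟨hE', ?_⟩
          have hx : ¬ π (i, w) < π (r, v) := fun h => hnv (Or.inr ⟨hE', h⟩)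
          exact lt_of_le_of_ne (not_lt.mp hx) (hπne v)
      have hv' : (E (r, v') (i, w) ∧ π (i, w) < π (r, v')) ∨
          (E (i, w) (r, v') ∧ π (r, v') < π (i, w)) := by
        by_cases hE : E (r, v') (i, w)
        · left
          refine ⟨hE, ?_⟩
          have hx : ¬ π (r, v') < π (i, w) := fun h => hnv' (Or.inl ⟨hE, h⟩)
          exact lt_of_le_of_ne (not_lt.mp hx) (hπne v').symm
        · right
          have hE' : E (i, w) (r, v') := by
            by_contra h
            exact hE ((htot v').mpr h)
          refine ⟨hE', ?_⟩
          have hx : ¬ π (i, w) < π (r, v') := fun h => hnv' (Or.inr ⟨hE', h⟩)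
          exact lt_of_le_of_ne (not_lt.mp hx) (hπne v')
      rcases hv with ⟨hE1, hlt1⟩ | ⟨hE1, hlt1⟩
      · -- π w < π v < π v' : pattern (true, true)
        have hE2 : E (r, v') (i, w) := by
          rcases hv' with ⟨hE2, _⟩ | ⟨_, hlt2⟩
          · exact hE2
          · omega
        refine Or.inl ?_
        intro j
        fin_cases j <;> simpa using (by first | exact hE1 | exact hE2)
      · rcases hv' with ⟨hE2, hlt2⟩ | ⟨hE2, hlt2⟩
        · -- π v < π w < π v' : pattern (false, true)
          refine Or.inr (Or.inl ?_)
          intro j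
          fin_cases j <;> simpa using (by first | exact hE1 | exact hE2)
        · -- π v < π v' < π w : pattern (false, false)
          refine Or.inr (Or.inr ?_)
          intro j
          fin_cases j <;> simpa using (by first | exact hE1 | exact hE2)
    -- assemble the counting
    have hsplit := cardcompl (fun w => nb v i w ∨ nb v' i w)
    have hC := cardor (fun w => nb v i w) (fun w => nb v' i w)
    have hX1 : Nat.card {w : Fin n // ¬ (nb v i w ∨ nb v' i w)} ≤
        Nat.card {w : Fin n // pat ![true, true] w ∨
          (pat ![false, true] w ∨ pat ![false, false] w)} :=
      cardmono _ _ hcover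
    have hX2 := cardor (fun w => pat ![true, true] w)
      (fun w => pat ![false, true] w ∨ pat ![false, false] w)
    have hX3 := cardor (fun w => pat ![false, true] w) (fun w => pat ![false, false] w)
    have hb1 := hbound ![true, true]
    have hb2 := hbound ![false, true]
    have hb3 := hbound ![false, false]
    have hsplit' : (Nat.card {w : Fin n // nb v i w ∨ nb v' i w} : ℝ) +
        (Nat.card {w : Fin n // ¬ (nb v i w ∨ nb v' i w)} : ℝ) = n := by
      exact_mod_cast congrArg (fun m : ℕ => (m : ℝ)) hsplit
    have hC' : (Nat.card {w : Fin n // nb v i w ∨ nb v' i w} : ℝ) ≤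
        (Nat.card {w : Fin n // nb v i w} : ℝ) + Nat.card {w : Fin n // nb v' i w} := by
      exact_mod_cast hC
    have hX1' : (Nat.card {w : Fin n // ¬ (nb v i w ∨ nb v' i w)} : ℝ) ≤
        Nat.card {w : Fin n // pat ![true, true] w ∨
          (pat ![false, true] w ∨ pat ![false, false] w)} := by
      exact_mod_cast hX1
    have hX2' : (Nat.card {w : Fin n // pat ![true, true] w ∨
          (pat ![false, true] w ∨ pat ![false, false] w)} : ℝ) ≤
        (Nat.card {w : Fin n // pat ![true, true] w} : ℝ) +
          Nat.card {w : Fin n // pat ![false, true] w ∨ pat ![false, false] w} := by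
      exact_mod_cast hX2
    have hX3' : (Nat.card {w : Fin n // pat ![false, true] w ∨ pat ![false, false] w} : ℝ) ≤
        (Nat.card {w : Fin n // pat ![false, true] w} : ℝ) +
          Nat.card {w : Fin n // pat ![false, false] w} := by
      exact_mod_cast hX3
    linarith
  -- main argument: build an injective map from the unfriendly vertices to parts ≠ r
  have hwit : ∀ v : {v : Fin n // ¬ ∀ i : Fin k, i ≠ r →
      (n : ℝ) / 17 ≤ Nat.card {w : Fin n // nb v i w}},
      ∃ i : Fin k, i ≠ r ∧ (Nat.card {w : Fin n // nb v.1 i w} : ℝ) < (n : ℝ) / 17 := by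
    intro v
    have := v.2
    push_neg at this
    exact this
  set g : {v : Fin n // ¬ ∀ i : Fin k, i ≠ r →
      (n : ℝ) / 17 ≤ Nat.card {w : Fin n // nb v i w}} → {i : Fin k // i ≠ r} :=
    fun v => ⟨(hwit v).choose, (hwit v).choose_spec.1⟩ with hgdef
  have hginj : Function.Injective g := by
    intro v v' heq
    by_contra hne
    have hvv' : v.1 ≠ v'.1 := fun h => hne (Subtype.ext h)
    have hi := (hwit v).choose_spec
    have hi' := (hwit v').choose_spec
    have hieq : (hwit v').choose = (hwit v).choose := by
      have := congrArg Subtype.val heq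
      exact this.symm
    rw [hieq] at hi'
    have hπne : π (r, v.1) ≠ π (r, v'.1) := by
      intro h
      have := hπ h
      exact hvv' (congrArg Prod.snd this)
    rcases lt_or_gt_of_ne hπne with h | h
    · exact key v.1 v'.1 hvv' (hwit v).choose hi.1 h hi.2 hi'.2
    · exact key v'.1 v.1 (Ne.symm hvv') (hwit v).choose hi.1 h hi'.2 hi.2
  have hle : Nat.card {v : Fin n // ¬ ∀ i : Fin k, i ≠ r →
      (n : ℝ) / 17 ≤ Nat.card {w : Fin n // nb v i w}} ≤ Nat.card {i : Fin k // i ≠ r} :=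
    Nat.card_le_card_of_injective g hginj
  have hcard : Nat.card {i : Fin k // i ≠ r} = k - 1 := by
    rw [Nat.card_eq_fintype_card]
    have : Fintype.card {i : Fin k // ¬ i = r} = Fintype.card (Fin k) -
        Fintype.card {i : Fin k // i = r} := Fintype.card_subtype_compl _
    simpa [Fintype.card_subtype_eq] using this
  rw [hcard] at hle
  exact hle
end
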